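/- arXiv:1802.06292 — 4 statements merged into one kernel-verified Lean document; each statement's English description precedes it below -/
import Mathlib

section
/- Let U_1, ..., U_n be independent real-valued random variables such that |U_j − E U_j| ≤ M almost surely for every j, and set h = M/3 and Ū = n^{−1} Σ_{j=1}^n U_j. Then for every t > 0 and all ε > 0, c ∈ (0,1) with 0 < εh ≤ c < 1, P( Ū − E Ū ≥ t/(nε) + nε·Var(Ū)/(2(1−c)) ) ≤ e^{−t}. -/
open MeasureTheory ProbabilityTheory BigOperators
open scoped Nat

lemma fact_ge_two_mul_three_pow (n : ℕ) : (2 * 3 ^ n : ℝ) ≤ (n + 2)! := by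
  induction n with
  | zero => norm_num [Nat.factorial]
  | succ k ih =>
    have : ((k + 3)! : ℝ) = (k + 3) * (k + 2)! := by
      rw [show k + 3 = (k + 2) + 1 from rfl, Nat.factorial_succ]; push_cast; ring
    have h3 : (3 : ℝ) ≤ (k : ℝ) + 3 := by linarith
    rw [this]
    calc (2 * 3 ^ (k + 1) : ℝ) = 3 * (2 * 3 ^ k) := by ring
    _ ≤ ((k : ℝ) + 3) * (k + 2)! := mul_le_mul h3 ih (by positivity) (by positivity)

lemma exp_le_quad {y c : ℝ} (hy : |y| ≤ 3 * c) (hc1 : c < 1) :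
    Real.exp y ≤ 1 + y + y ^ 2 / (2 * (1 - c)) := by
  have hc0 : 0 ≤ c := by nlinarith [abs_nonneg y]
  have hexp : Real.exp y = ∑' n : ℕ, y ^ n / n ! := by
    rw [Real.exp_eq_exp_ℝ, NormedSpace.exp_eq_tsum_div]
  have hsum : Summable (fun n : ℕ => y ^ n / n !) := Real.summable_pow_div_factorial y
  have hsum1 : Summable (fun n : ℕ => y ^ (n + 1) / (n + 1)!) := by
    exact (summable_nat_add_iff (f := fun n : ℕ => y ^ n / n !) 1).2 hsum
  have hsum2 : Summable (fun n : ℕ => y ^ (n + 2) / (n + 2)!) := by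
    exact (summable_nat_add_iff (f := fun n : ℕ => y ^ n / n !) 2).2 hsum
  have hsplit : ∑' n : ℕ, y ^ n / n ! = 1 + (y + ∑' n : ℕ, y ^ (n + 2) / (n + 2)!) := by
    rw [Summable.tsum_eq_zero_add hsum]
    simp only [pow_zero, Nat.factorial_zero, Nat.cast_one, div_one]
    congr 1
    rw [Summable.tsum_eq_zero_add hsum1]
    simp [Nat.factorial_one]
  have hgeom : Summable (fun n : ℕ => y ^ 2 / 2 * c ^ n) :=
    (summable_geometric_of_lt_one hc0 hc1).mul_left _
  have hterm : ∀ n : ℕ, y ^ (n + 2) / (n + 2)! ≤ y ^ 2 / 2 * c ^ n := by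
    intro n
    have h1 : y ^ (n + 2) / ((n + 2)! : ℝ) ≤ |y| ^ (n + 2) / (2 * 3 ^ n) := by
      apply div_le_div₀ (by positivity) _ (by positivity) (fact_ge_two_mul_three_pow n)
      rw [← abs_pow]; exact le_abs_self _
    have h2 : |y| ^ (n + 2) / (2 * 3 ^ n : ℝ) ≤ y ^ 2 / 2 * c ^ n := by
      have : |y| ^ (n + 2) = y ^ 2 * |y| ^ n := by
        rw [pow_add, sq_abs]; ring
      rw [this]
      have hyn : |y| ^ n ≤ (3 * c) ^ n := pow_le_pow_left₀ (abs_nonneg y) hy n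
      have h3 : (0 : ℝ) < 3 ^ n := by positivity
      calc y ^ 2 * |y| ^ n / (2 * 3 ^ n) ≤ y ^ 2 * (3 * c) ^ n / (2 * 3 ^ n) := by
            gcongr
      _ = y ^ 2 / 2 * c ^ n := by rw [mul_pow]; field_simp
    exact h1.trans h2
  have htail : ∑' n : ℕ, y ^ (n + 2) / (n + 2)! ≤ y ^ 2 / (2 * (1 - c)) := by
    calc ∑' n : ℕ, y ^ (n + 2) / (n + 2)! ≤ ∑' n : ℕ, y ^ 2 / 2 * c ^ n :=
          Summable.tsum_le_tsum hterm hsum2 hgeom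
    _ = y ^ 2 / 2 * (1 - c)⁻¹ := by
        rw [tsum_mul_left, tsum_geometric_of_lt_one hc0 hc1]
    _ = y ^ 2 / (2 * (1 - c)) := by field_simp
  rw [hexp, hsplit]
  linarith

lemma integrable_exp_mul_of_bounded {Ω : Type*} [MeasurableSpace Ω] {μ : Measure Ω}
    [IsProbabilityMeasure μ] {X : Ω → ℝ} (hX : Measurable X) {B ε : ℝ}
    (hbd : ∀ᵐ ω ∂μ, |X ω| ≤ B) :
    Integrable (fun ω => Real.exp (ε * X ω)) μ := by
  refine Integrable.mono' (integrable_const (Real.exp (|ε| * B)))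
    ((hX.const_mul ε).exp.aestronglyMeasurable) ?_
  filter_upwards [hbd] with ω hω
  rw [Real.norm_eq_abs, Real.abs_exp, Real.exp_le_exp]
  calc ε * X ω ≤ |ε * X ω| := le_abs_self _
  _ = |ε| * |X ω| := abs_mul _ _
  _ ≤ |ε| * B := by
      apply mul_le_mul_of_nonneg_left hω (abs_nonneg _)

lemma mgf_le_of_bounded {Ω : Type*} [MeasurableSpace Ω] {μ : Measure Ω}
    [IsProbabilityMeasure μ] {X : Ω → ℝ} (hX : Measurable X)
    (hcent : ∫ ω, X ω ∂μ = 0) {M ε c : ℝ} (hε : 0 < ε)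
    (hbd : ∀ᵐ ω ∂μ, |X ω| ≤ M) (hεM : ε * M ≤ 3 * c) (hc1 : c < 1) :
    mgf X μ ε ≤ Real.exp (ε ^ 2 * (∫ ω, X ω ^ 2 ∂μ) / (2 * (1 - c))) := by
  have hmem : MemLp X 2 μ := by
    refine memLp_of_bounded (a := -M) (b := M) ?_ hX.aestronglyMeasurable 2
    filter_upwards [hbd] with ω hω
    exact abs_le.1 hω
  have hint1 : Integrable X μ := hmem.integrable one_le_two
  have hint2 : Integrable (fun ω => X ω ^ 2) μ := hmem.integrable_sq
  have hintexp : Integrable (fun ω => Real.exp (ε * X ω)) μ :=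
    integrable_exp_mul_of_bounded hX hbd
  have hpt : ∀ᵐ ω ∂μ, Real.exp (ε * X ω) ≤
      1 + (ε * X ω + ε ^ 2 / (2 * (1 - c)) * X ω ^ 2) := by
    filter_upwards [hbd] with ω hω
    have h1 : |ε * X ω| ≤ 3 * c := by
      rw [abs_mul, abs_of_pos hε]
      calc ε * |X ω| ≤ ε * M := mul_le_mul_of_nonneg_left hω hε.le
      _ ≤ 3 * c := hεM
    have := exp_le_quad h1 hc1
    calc Real.exp (ε * X ω) ≤ 1 + ε * X ω + (ε * X ω) ^ 2 / (2 * (1 - c)) := this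
    _ = 1 + (ε * X ω + ε ^ 2 / (2 * (1 - c)) * X ω ^ 2) := by ring
  have hrhs_int : Integrable
      (fun ω => 1 + (ε * X ω + ε ^ 2 / (2 * (1 - c)) * X ω ^ 2)) μ :=
    (integrable_const 1).add ((hint1.const_mul ε).add (hint2.const_mul _))
  calc mgf X μ ε = ∫ ω, Real.exp (ε * X ω) ∂μ := rfl
  _ ≤ ∫ ω, 1 + (ε * X ω + ε ^ 2 / (2 * (1 - c)) * X ω ^ 2) ∂μ :=
      integral_mono_ae hintexp hrhs_int hpt
  _ = 1 + (ε * ∫ ω, X ω ∂μ + ε ^ 2 / (2 * (1 - c)) * ∫ ω, X ω ^ 2 ∂μ) := by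
      have e1 : ∫ ω, 1 + (ε * X ω + ε ^ 2 / (2 * (1 - c)) * X ω ^ 2) ∂μ
          = (∫ _ω, (1:ℝ) ∂μ) + ∫ ω, ε * X ω + ε ^ 2 / (2 * (1 - c)) * X ω ^ 2 ∂μ :=
        integral_add (integrable_const 1) ((hint1.const_mul ε).add (hint2.const_mul _))
      have e2 : ∫ ω, ε * X ω + ε ^ 2 / (2 * (1 - c)) * X ω ^ 2 ∂μ
          = (∫ ω, ε * X ω ∂μ) + ∫ ω, ε ^ 2 / (2 * (1 - c)) * X ω ^ 2 ∂μ :=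
        integral_add (hint1.const_mul ε) (hint2.const_mul _)
      rw [e1, e2, integral_const_mul, integral_const_mul, integral_const]
      simp
  _ = ε ^ 2 * (∫ ω, X ω ^ 2 ∂μ) / (2 * (1 - c)) + 1 := by rw [hcent]; ring
  _ ≤ Real.exp (ε ^ 2 * (∫ ω, X ω ^ 2 ∂μ) / (2 * (1 - c))) := Real.add_one_le_exp _

/-- Craig's refinement of Bernstein's inequality. If `U_1,...,U_n` are
independent with `|U_j − E U_j| ≤ M` a.s., `h = M/3`, `Ū = n⁻¹ Σ_j U_j`, then for all
`t > 0` and `0 < εh ≤ c < 1`,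
`P(Ū − EŪ ≥ t/(nε) + nε·Var(Ū)/(2(1−c))) ≤ e^{−t}`. -/
theorem craig_bernstein_inequality
    {Ω : Type*} [MeasurableSpace Ω] (μ : Measure Ω) [IsProbabilityMeasure μ]
    (n : ℕ) (hn : 0 < n) (U : Fin n → Ω → ℝ) (M : ℝ)
    (hmeas : ∀ j, Measurable (U j))
    (hindep : iIndepFun U μ)
    (hbdd : ∀ j, ∀ᵐ ω ∂μ, |U j ω - ∫ ω', U j ω' ∂μ| ≤ M)
    (t ε c : ℝ) (ht : 0 < t)
    (hεh : 0 < ε * (M / 3)) (hc : ε * (M / 3) ≤ c) (hc1 : c < 1) :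
    μ {ω | (n : ℝ)⁻¹ * ∑ j, U j ω - (∫ ω', (n : ℝ)⁻¹ * ∑ j, U j ω' ∂μ) ≥
        t / (n * ε) +
          n * ε * variance (fun ω' => (n : ℝ)⁻¹ * ∑ j, U j ω') μ / (2 * (1 - c))} ≤
      ENNReal.ofReal (Real.exp (-t)) := by
  -- basic positivity facts
  have hM : 0 < M := by
    obtain ⟨ω, hω⟩ := (hbdd ⟨0, hn⟩).exists
    have h0 : 0 ≤ M := le_trans (abs_nonneg _) hω
    rcases h0.lt_or_eq with h | h
    · exact h
    · exfalso; rw [← h] at hεh; simp at hεh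
  have hε : 0 < ε := by nlinarith
  have hcpos : 0 < c := lt_of_lt_of_le hεh hc
  have hnR : (0 : ℝ) < n := Nat.cast_pos.2 hn
  have hεM3 : ε * M ≤ 3 * c := by nlinarith
  -- centered variables
  set m : Fin n → ℝ := fun j => ∫ ω, U j ω ∂μ with hm
  set X : Fin n → Ω → ℝ := fun j ω => U j ω - m j with hXdef
  have hXmeas : ∀ j, Measurable (X j) := fun j => (hmeas j).sub measurable_const
  have hXindep : iIndepFun X μ :=
    hindep.comp (fun j (x : ℝ) => x - m j) (fun j => measurable_id.sub measurable_const)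
  have hXbdd : ∀ j, ∀ᵐ ω ∂μ, |X j ω| ≤ M := hbdd
  have hUmem : ∀ j, MemLp (U j) 2 μ := by
    intro j
    refine memLp_of_bounded (a := m j - M) (b := m j + M) ?_ (hmeas j).aestronglyMeasurable 2
    filter_upwards [hbdd j] with ω hω
    have := abs_le.1 hω
    constructor <;> [linarith [this.1]; linarith [this.2]]
  have hUint : ∀ j, Integrable (U j) μ := fun j => (hUmem j).integrable one_le_two
  have hXcent : ∀ j, ∫ ω, X j ω ∂μ = 0 := by
    intro j
    rw [hXdef]
    simp only
    rw [integral_sub (hUint j) (integrable_const _), integral_const]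
    simp [hm]
  -- second moment = variance of U j
  have hXsq : ∀ j, ∫ ω, X j ω ^ 2 ∂μ = variance (U j) μ := by
    intro j
    rw [variance_eq_integral (hUmem j).aestronglyMeasurable.aemeasurable]
  -- variance of the sum
  have hVsum : variance (fun ω => ∑ j, U j ω) μ = ∑ j, variance (U j) μ := by
    have h := IndepFun.variance_sum (μ := μ) (X := U) (s := Finset.univ)
      (fun i _ => hUmem i) (fun i _ j _ hij => hindep.indepFun hij)
    rw [← h]
    congr 1
    ext ω
    simp [Finset.sum_apply]
  set V : ℝ := variance (fun ω' => (n : ℝ)⁻¹ * ∑ j, U j ω') μ with hV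
  have hVU : variance (fun ω => ∑ j, U j ω) μ = (n : ℝ) ^ 2 * V := by
    rw [hV, variance_const_mul]
    field_simp
  have hVnonneg : 0 ≤ V := variance_nonneg _ _
  -- threshold
  set a : ℝ := t / (n * ε) + n * ε * V / (2 * (1 - c)) with ha
  -- the sum of centered variables
  set S : Ω → ℝ := ∑ j, X j with hS
  have hSval : ∀ ω, S ω = (∑ j, U j ω) - ∑ j, m j := by
    intro ω
    rw [hS]
    simp [Finset.sum_apply, hXdef, Finset.sum_sub_distrib]
  -- integral of the mean
  have hI : ∫ ω', (n : ℝ)⁻¹ * ∑ j, U j ω' ∂μ = (n : ℝ)⁻¹ * ∑ j, m j := by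
    rw [integral_const_mul, integral_finset_sum _ (fun j _ => hUint j)]
  -- event equality
  have hevent : {ω | (n : ℝ)⁻¹ * ∑ j, U j ω - (∫ ω', (n : ℝ)⁻¹ * ∑ j, U j ω' ∂μ) ≥ a}
      = {ω | (n : ℝ) * a ≤ S ω} := by
    ext ω
    simp only [Set.mem_setOf_eq, ge_iff_le, hI, hSval ω]
    constructor
    · intro h
      have h2 := mul_le_mul_of_nonneg_left h hnR.le
      rw [mul_sub, ← mul_assoc, ← mul_assoc, mul_inv_cancel₀ hnR.ne', one_mul, one_mul] at h2
      exact h2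
    · intro h
      have h2 : (n : ℝ)⁻¹ * ((n:ℝ) * a) ≤ (n : ℝ)⁻¹ * ((∑ j, U j ω) - ∑ j, m j) :=
        mul_le_mul_of_nonneg_left h (by positivity)
      rw [← mul_assoc, inv_mul_cancel₀ hnR.ne', one_mul] at h2
      linarith [h2]
  -- integrability of exp(ε * S)
  have hSbdd : ∀ᵐ ω ∂μ, |S ω| ≤ n * M := by
    have := (ae_all_iff).2 hXbdd
    filter_upwards [this] with ω hω
    rw [hS]
    calc |(∑ j, X j) ω| = |∑ j, X j ω| := by simp [Finset.sum_apply]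
    _ ≤ ∑ j, |X j ω| := Finset.abs_sum_le_sum_abs _ _
    _ ≤ ∑ _j : Fin n, M := Finset.sum_le_sum (fun j _ => hω j)
    _ = n * M := by simp [Finset.sum_const, nsmul_eq_mul]
  have hSmeas : Measurable S := by
    have he : (∑ j, X j) = fun ω => ∑ j, X j ω := by ext ω; simp [Finset.sum_apply]
    rw [hS, he]
    exact Finset.measurable_sum _ (fun j _ => hXmeas j)
  have hSint : Integrable (fun ω => Real.exp (ε * S ω)) μ :=
    integrable_exp_mul_of_bounded hSmeas hSbdd
  -- Chernoff bound
  have hchern := measure_ge_le_exp_mul_mgf (μ := μ) (X := S) (t := ε) ((n : ℝ) * a) hε.le hSint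
  -- mgf product bound
  have hmgf : mgf S μ ε ≤ Real.exp (ε ^ 2 * ((n:ℝ)^2 * V) / (2 * (1 - c))) := by
    rw [hS, hXindep.mgf_sum hXmeas]
    calc ∏ j, mgf (X j) μ ε
        ≤ ∏ j, Real.exp (ε ^ 2 * (∫ ω, X j ω ^ 2 ∂μ) / (2 * (1 - c))) := by
          apply Finset.prod_le_prod (fun j _ => mgf_nonneg)
          intro j _
          exact mgf_le_of_bounded (hXmeas j) (hXcent j) hε (hXbdd j) hεM3 hc1
    _ = Real.exp (∑ j, ε ^ 2 * (∫ ω, X j ω ^ 2 ∂μ) / (2 * (1 - c))) := by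
          rw [Real.exp_sum]
    _ = Real.exp (ε ^ 2 * ((n:ℝ)^2 * V) / (2 * (1 - c))) := by
          congr 1
          rw [← hVU, hVsum]
          rw [← Finset.sum_div, ← Finset.mul_sum]
          congr 2
          exact Finset.sum_congr rfl (fun j _ => hXsq j)
  -- conclusion
  have hfinal : (μ {ω | (n : ℝ) * a ≤ S ω}).toReal ≤ Real.exp (-t) := by
    calc (μ {ω | (n : ℝ) * a ≤ S ω}).toReal
        ≤ Real.exp (-ε * ((n : ℝ) * a)) * mgf S μ ε := hchern
    _ ≤ Real.exp (-ε * ((n : ℝ) * a)) * Real.exp (ε ^ 2 * ((n:ℝ)^2 * V) / (2 * (1 - c))) := by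
          apply mul_le_mul_of_nonneg_left hmgf (Real.exp_nonneg _)
    _ = Real.exp (-ε * ((n : ℝ) * a) + ε ^ 2 * ((n:ℝ)^2 * V) / (2 * (1 - c))) :=
          (Real.exp_add _ _).symm
    _ = Real.exp (-t) := by
          congr 1
          rw [ha]
          have h1c : (1 : ℝ) - c ≠ 0 := by linarith
          field_simp
          ring
  calc μ _ = μ {ω | (n : ℝ) * a ≤ S ω} := by rw [hevent]
  _ = ENNReal.ofReal (μ {ω | (n : ℝ) * a ≤ S ω}).toReal :=
      (ENNReal.ofReal_toReal (measure_ne_top μ _)).symm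
  _ ≤ ENNReal.ofReal (Real.exp (-t)) := ENNReal.ofReal_le_ofReal hfinal
end

section
/- Let q ≥ 2 and n ≥ 1 be integers and let p ∈ [0, 1 − 1/q] be such that d = pn is an integer. Then there exists a set C ⊆ {0, 1, ..., q−1}^n with cardinality |C| ≥ q^{n(1 − h_q(p))} such that any two distinct elements of C differ in at least d + 1 coordinates (i.e., C is a q-ary code of block length n with minimal Hamming distance at least d + 1). -/
open BigOperators

/-- The q-ary entropy function `h_q(p)`, with the convention `0·log 0 = 0`
(note `Real.logb q 0 = 0` in Mathlib, so the convention is automatic). -/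
noncomputable def qaryEntropy (q : ℕ) (p : ℝ) : ℝ :=
  p * Real.logb q (q - 1) - p * Real.logb q p - (1 - p) * Real.logb q (1 - p)

section GVAux
open Finset

lemma fiber_card (q n : ℕ) (hq : 2 ≤ q) (x : Fin n → Fin q) (D : Finset (Fin n)) :
    ({y : Fin n → Fin q | ({i | y i ≠ x i} : Finset (Fin n)) = D} : Finset _).card
      = (q - 1) ^ D.card := by
  have hcard : ∀ y : Fin n → Fin q,
      (({i | y i ≠ x i} : Finset (Fin n)) = D) ↔ ∀ i, (y i ≠ x i ↔ i ∈ D) := by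
    intro y
    constructor
    · intro h i; rw [← h]; simp
    · intro h; ext i; simp [h i]
  have : ({y : Fin n → Fin q | ({i | y i ≠ x i} : Finset (Fin n)) = D} : Finset _)
      = ({y : Fin n → Fin q | ∀ i, (y i ≠ x i ↔ i ∈ D)} : Finset _) := by
    ext y; simp [hcard y]
  rw [this]
  rw [← Fintype.card_subtype]
  rw [Fintype.card_congr (Equiv.subtypePiEquivPi (p := fun i v => v ≠ x i ↔ i ∈ D))]
  rw [Fintype.card_pi]
  have : ∀ i : Fin n, Fintype.card {v : Fin q // v ≠ x i ↔ i ∈ D}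
      = if i ∈ D then q - 1 else 1 := by
    intro i
    by_cases h : i ∈ D
    · simp only [h, if_true]
      rw [Fintype.card_congr (Equiv.subtypeEquivRight (q := fun v => v ≠ x i) (by simp [h]))]
      rw [Fintype.card_subtype_compl, Fintype.card_subtype_eq, Fintype.card_fin]
    · simp only [h, if_false]
      rw [Fintype.card_congr (Equiv.subtypeEquivRight (q := fun v => v = x i) (by simp [h]))]
      rw [Fintype.card_subtype_eq]
  rw [Finset.prod_congr rfl (fun i _ => this i)]
  rw [Finset.prod_ite_mem, univ_inter, Finset.prod_const]

lemma ball_card (q n d : ℕ) (hq : 2 ≤ q) (x : Fin n → Fin q) :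
    ({y : Fin n → Fin q | hammingDist x y ≤ d} : Finset _).card
      = ∑ D ∈ ({D : Finset (Fin n) | D.card ≤ d} : Finset _), (q - 1) ^ D.card := by
  rw [Finset.card_eq_sum_card_fiberwise
    (f := fun y : Fin n → Fin q => ({i | y i ≠ x i} : Finset (Fin n)))
    (t := ({D : Finset (Fin n) | D.card ≤ d} : Finset _))]
  · apply Finset.sum_congr rfl
    intro D hD
    rw [← fiber_card q n hq x D]
    congr 1
    ext y
    simp only [mem_filter, mem_univ, true_and]
    constructor
    · rintro ⟨_, h⟩; exact h
    · intro h
      refine ⟨?_, h⟩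
      simp only [mem_filter, mem_univ, true_and] at hD ⊢
      rw [hammingDist, ← h] at *
      convert hD using 2
      ext i; simp [ne_comm]
  · intro y hy
    simp only [Finset.mem_coe, mem_filter, mem_univ, true_and] at hy ⊢
    rw [hammingDist] at hy
    convert hy using 2
    ext i; simp [ne_comm]

lemma exists_maximal_code (q n d : ℕ) :
    ∃ C : Finset (Fin n → Fin q),
      (∀ x ∈ C, ∀ y ∈ C, x ≠ y → d + 1 ≤ hammingDist x y) ∧
      ∀ x : Fin n → Fin q, ∃ c ∈ C, hammingDist c x ≤ d := by
  classical
  set P : Finset (Fin n → Fin q) → Prop :=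
    fun C => ∀ x ∈ C, ∀ y ∈ C, x ≠ y → d + 1 ≤ hammingDist x y with hP
  have hne : (Finset.univ.filter P).Nonempty :=
    ⟨∅, by simp [hP]⟩
  obtain ⟨C, hC, hmax⟩ := Finset.exists_max_image (Finset.univ.filter P) Finset.card hne
  simp only [mem_filter, mem_univ, true_and] at hC
  refine ⟨C, hC, ?_⟩
  intro x
  by_contra hx
  push_neg at hx
  have hxC : x ∉ C := fun h => by
    have := hx x h; simp [hammingDist_self] at this
  have hP' : P (insert x C) := by
    intro a ha b hb hab
    rcases Finset.mem_insert.mp ha with ha' | ha2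
    · subst ha'
      rcases Finset.mem_insert.mp hb with hb' | hb2
      · exact absurd hb'.symm hab
      · rw [hammingDist_comm]; exact hx b hb2
    · rcases Finset.mem_insert.mp hb with hb' | hb2
      · rw [hb']; exact hx a ha2
      · exact hC a ha2 b hb2 hab
  have := hmax _ (Finset.mem_filter.mpr ⟨Finset.mem_univ _, hP'⟩)
  rw [Finset.card_insert_of_notMem hxC] at this
  omega

lemma sum_binom_one (n : ℕ) (p : ℝ) :
    ∑ t ∈ (Finset.univ : Finset (Finset (Fin n))), p ^ t.card * (1 - p) ^ (n - t.card)
      = 1 := by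
  have h := Finset.prod_add (fun _ : Fin n => p) (fun _ => 1 - p) Finset.univ
  simp only [add_sub_cancel, Finset.prod_const, one_pow, Finset.powerset_univ,
    Finset.card_sdiff_of_subset (Finset.subset_univ _), Finset.card_univ, Fintype.card_fin] at h
  exact h.symm

lemma volume_bound (q n d : ℕ) (hq : 2 ≤ q) (p : ℝ)
    (hp0 : 0 ≤ p) (hp1 : p ≤ 1 - 1 / q) (hd : (d : ℝ) = p * n) :
    ∑ D ∈ ({D : Finset (Fin n) | D.card ≤ d} : Finset _), ((q : ℝ) - 1) ^ D.card
      ≤ (q : ℝ) ^ ((n : ℝ) * qaryEntropy q p) := by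
  have hq0 : (0 : ℝ) < q := by positivity
  have hq1 : (1 : ℝ) < q := by exact_mod_cast hq
  have hqne1 : (q : ℝ) ≠ 1 := ne_of_gt hq1
  have hq1' : (0 : ℝ) < (q : ℝ) - 1 := by linarith
  rcases eq_or_lt_of_le hp0 with hp | hp
  · -- p = 0
    have hd0 : d = 0 := by
      have : (d : ℝ) = 0 := by rw [hd, ← hp]; ring
      exact_mod_cast this
    subst hd0
    have hT : ({D : Finset (Fin n) | D.card ≤ 0} : Finset (Finset (Fin n))) = {∅} := by
      ext D; simp [Finset.card_eq_zero, Nat.le_zero]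
    rw [hT]
    have hent : qaryEntropy q 0 = 0 := by simp [qaryEntropy]
    rw [← hp, hent]
    simp
  · -- 0 < p
    have hp1' : p < 1 := by
      have : (0:ℝ) < 1 / q := by positivity
      linarith
    have h1p : (0:ℝ) < 1 - p := by linarith
    have hdn : d ≤ n := by
      have : (d : ℝ) ≤ n := by
        rw [hd]; nlinarith [Nat.cast_nonneg (α := ℝ) n]
      exact_mod_cast this
    have hcast : ((n - d : ℕ) : ℝ) = (n : ℝ) - d := by
      rw [Nat.cast_sub hdn]
    have key : p ≤ ((q : ℝ) - 1) * (1 - p) := by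
      have hqne : (q : ℝ) ≠ 0 := ne_of_gt hq0
      have h1 : (q : ℝ) * p ≤ q - 1 := by
        have h2 := mul_le_mul_of_nonneg_left hp1 (le_of_lt hq0)
        rw [mul_sub, mul_one_div, div_self hqne, mul_one] at h2
        linarith
      nlinarith
    -- rewrite RHS
    have hM : (0:ℝ) < p ^ d * (1 - p) ^ (n - d) := by positivity
    have hRHS : (q : ℝ) ^ ((n : ℝ) * qaryEntropy q p)
        = ((q:ℝ) - 1) ^ d / (p ^ d * (1 - p) ^ (n - d)) := by
      have hexp : (n : ℝ) * qaryEntropy q p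
          = Real.logb q ((q:ℝ) - 1) * (d : ℝ) - Real.logb q p * (d : ℝ)
            - Real.logb q (1 - p) * ((n - d : ℕ) : ℝ) := by
        rw [hcast, qaryEntropy, hd]; ring
      rw [hexp, Real.rpow_sub hq0, Real.rpow_sub hq0]
      rw [Real.rpow_mul (le_of_lt hq0), Real.rpow_mul (le_of_lt hq0),
        Real.rpow_mul (le_of_lt hq0)]
      rw [Real.rpow_logb hq0 hqne1 hq1', Real.rpow_logb hq0 hqne1 hp,
        Real.rpow_logb hq0 hqne1 h1p]
      rw [Real.rpow_natCast, Real.rpow_natCast, Real.rpow_natCast]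
      rw [div_div]
    rw [hRHS, le_div_iff₀ hM]
    -- main estimate
    calc (∑ D ∈ ({D : Finset (Fin n) | D.card ≤ d} : Finset _), ((q : ℝ) - 1) ^ D.card)
          * (p ^ d * (1 - p) ^ (n - d))
        = ∑ D ∈ ({D : Finset (Fin n) | D.card ≤ d} : Finset _),
            ((q : ℝ) - 1) ^ D.card * (p ^ d * (1 - p) ^ (n - d)) := by
          rw [Finset.sum_mul]
      _ ≤ ∑ D ∈ ({D : Finset (Fin n) | D.card ≤ d} : Finset _),
            ((q : ℝ) - 1) ^ d * (p ^ D.card * (1 - p) ^ (n - D.card)) := by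
          apply Finset.sum_le_sum
          intro D hD
          have hk : D.card ≤ d := by
            simpa using hD
          set k := D.card with hkdef
          have hple : p ^ (d - k) ≤ (((q:ℝ) - 1) * (1 - p)) ^ (d - k) :=
            pow_le_pow_left₀ hp0 key _
          rw [mul_pow] at hple
          have e1 : ((q:ℝ) - 1) ^ d = ((q:ℝ) - 1) ^ k * ((q:ℝ) - 1) ^ (d - k) := by
            rw [← pow_add]; congr 1; omega
          have e2 : p ^ d = p ^ k * p ^ (d - k) := by
            rw [← pow_add]; congr 1; omega
          have e3 : (1 - p) ^ (n - k) = (1 - p) ^ (n - d) * (1 - p) ^ (d - k) := by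
            rw [← pow_add]; congr 1; omega
          calc ((q:ℝ) - 1) ^ k * (p ^ d * (1 - p) ^ (n - d))
              = (((q:ℝ) - 1) ^ k * p ^ k * (1 - p) ^ (n - d)) * p ^ (d - k) := by
                rw [e2]; ring
            _ ≤ (((q:ℝ) - 1) ^ k * p ^ k * (1 - p) ^ (n - d))
                  * (((q:ℝ) - 1) ^ (d - k) * (1 - p) ^ (d - k)) :=
                mul_le_mul_of_nonneg_left hple (by positivity)
            _ = ((q:ℝ) - 1) ^ d * (p ^ k * (1 - p) ^ (n - k)) := by
                rw [e1, e3]; ring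
      _ ≤ ∑ D ∈ (Finset.univ : Finset (Finset (Fin n))),
            ((q : ℝ) - 1) ^ d * (p ^ D.card * (1 - p) ^ (n - D.card)) := by
          apply Finset.sum_le_sum_of_subset_of_nonneg (Finset.filter_subset _ _)
          intro D _ _
          positivity
      _ = ((q : ℝ) - 1) ^ d := by
          rw [← Finset.mul_sum, sum_binom_one, mul_one]

end GVAux

/-- the Gilbert–Varshamov bound. For `q ≥ 2`, `n ≥ 1` and
`p ∈ [0, 1 − 1/q]` with `d = pn` an integer, there is a `q`-ary code of block
length `n`, minimal Hamming distance at least `d + 1`, and cardinality at least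
`q^{n(1 − h_q(p))}`. -/
theorem gilbert_varshamov_bound (q n d : ℕ) (hq : 2 ≤ q) (hn : 1 ≤ n) (p : ℝ)
    (hp0 : 0 ≤ p) (hp1 : p ≤ 1 - 1 / q) (hd : (d : ℝ) = p * n) :
    ∃ C : Finset (Fin n → Fin q),
      (q : ℝ) ^ ((n : ℝ) * (1 - qaryEntropy q p)) ≤ (C.card : ℝ) ∧
      ∀ x ∈ C, ∀ y ∈ C, x ≠ y → d + 1 ≤ hammingDist x y := by
  classical
  obtain ⟨C, hCdist, hCcov⟩ := exists_maximal_code q n d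
  refine ⟨C, ?_, hCdist⟩
  have hq0 : (0 : ℝ) < q := by positivity
  set V : ℕ := ∑ D ∈ ({D : Finset (Fin n) | D.card ≤ d} : Finset _), (q - 1) ^ D.card with hV
  have hcover : q ^ n ≤ C.card * V := by
    have hsub : (Finset.univ : Finset (Fin n → Fin q))
        ⊆ C.biUnion (fun c => ({y : Fin n → Fin q | hammingDist c y ≤ d} : Finset _)) := by
      intro x _
      obtain ⟨c, hc, hcd⟩ := hCcov x
      exact Finset.mem_biUnion.mpr ⟨c, hc, by simp [hcd]⟩
    have h1 : (Finset.univ : Finset (Fin n → Fin q)).card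
        ≤ ∑ c ∈ C, ({y : Fin n → Fin q | hammingDist c y ≤ d} : Finset _).card :=
      le_trans (Finset.card_le_card hsub) (Finset.card_biUnion_le)
    have h2 : ∀ c ∈ C, ({y : Fin n → Fin q | hammingDist c y ≤ d} : Finset _).card = V :=
      fun c _ => ball_card q n d hq c
    rw [Finset.sum_congr rfl h2, Finset.sum_const, smul_eq_mul] at h1
    simpa using h1
  have hVcast : (V : ℝ) = ∑ D ∈ ({D : Finset (Fin n) | D.card ≤ d} : Finset _),
      ((q : ℝ) - 1) ^ D.card := by
    rw [hV, Nat.cast_sum]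
    apply Finset.sum_congr rfl
    intro D _
    rw [Nat.cast_pow, Nat.cast_sub (by omega : 1 ≤ q), Nat.cast_one]
  have hVle : (V : ℝ) ≤ (q : ℝ) ^ ((n : ℝ) * qaryEntropy q p) := by
    rw [hVcast]; exact volume_bound q n d hq p hp0 hp1 hd
  have hrpos : (0 : ℝ) < (q : ℝ) ^ ((n : ℝ) * qaryEntropy q p) :=
    Real.rpow_pos_of_pos hq0 _
  have hcoverR : ((q : ℝ) ^ n : ℝ) ≤ (C.card : ℝ) * (q : ℝ) ^ ((n : ℝ) * qaryEntropy q p) := by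
    have h3 : ((q ^ n : ℕ) : ℝ) ≤ ((C.card * V : ℕ) : ℝ) := by exact_mod_cast hcover
    rw [Nat.cast_mul, Nat.cast_pow] at h3
    calc ((q : ℝ) ^ n) ≤ (C.card : ℝ) * V := h3
      _ ≤ (C.card : ℝ) * (q : ℝ) ^ ((n : ℝ) * qaryEntropy q p) :=
        mul_le_mul_of_nonneg_left hVle (Nat.cast_nonneg _)
  have hsplit : (q : ℝ) ^ ((n : ℝ) * (1 - qaryEntropy q p))
      = (q : ℝ) ^ n / (q : ℝ) ^ ((n : ℝ) * qaryEntropy q p) := by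
    have hnn : (n : ℝ) * (1 - qaryEntropy q p) = (n : ℝ) - (n : ℝ) * qaryEntropy q p := by ring
    rw [hnn, Real.rpow_sub hq0, Real.rpow_natCast]
  rw [hsplit, div_le_iff₀ hrpos]
  exact hcoverR
end

section
/- Let β, L > 0 with ℓ = ⌊β⌋, let f ∈ Σ(β,L), and let K : ℝ → ℝ be an integrable kernel supported on [−1,1] of order ℓ, i.e., ∫ K(u) du = 1 and ∫ uʲ K(u) du = 0 for j = 1, ..., ℓ. Then for every h ∈ (0, 1/2] and every t₀ ∈ [h, 1−h], | (1/h)·∫₀¹ K((τ − t₀)/h)·f(τ) dτ − f(t₀) | ≤ (L·h^β/ℓ!)·∫_{−1}^{1} |K(u)|·|u|^β du. -/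
open MeasureTheory Set

def HolderClassR (β L : ℝ) (f : ℝ → ℝ) : Prop :=
  (∀ k < ⌊β⌋₊, DifferentiableOn ℝ (iteratedDeriv k f) (Icc (0:ℝ) 1)) ∧
  ∀ x ∈ Icc (0:ℝ) 1, ∀ y ∈ Icc (0:ℝ) 1,
    |iteratedDeriv ⌊β⌋₊ f x - iteratedDeriv ⌊β⌋₊ f y| ≤ L * |x - y| ^ (β - (⌊β⌋₊ : ℝ))


lemma itDW_eq_itD (f : ℝ → ℝ) (s : Set ℝ) (hs : UniqueDiffOn ℝ s) (n : ℕ)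
    (hd : ∀ k < n, ∀ x ∈ s, DifferentiableAt ℝ (iteratedDeriv k f) x) :
    ∀ x ∈ s, iteratedDerivWithin n f s x = iteratedDeriv n f x := by
  induction n with
  | zero => intro x hx; simp
  | succ n ih =>
    intro x hx
    have hEq : Set.EqOn (iteratedDerivWithin n f s) (iteratedDeriv n f) s :=
      fun y hy => ih (fun k hk => hd k (Nat.lt_succ_of_lt hk)) y hy
    rw [iteratedDerivWithin_succ, derivWithin_congr hEq (hEq hx),
      (hd n (Nat.lt_succ_self n) x hx).derivWithin (hs x hx), ← iteratedDeriv_succ]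

lemma forward_taylor (f : ℝ → ℝ) (n : ℕ) (a b : ℝ) (hab : a < b)
    (hd : ∀ k ≤ n, ∀ x ∈ Icc a b, DifferentiableAt ℝ (iteratedDeriv k f) x) :
    ∃ ξ ∈ Ioo a b, f b - ∑ k ∈ Finset.range (n + 2),
        iteratedDeriv k f a * (b - a) ^ k / (k.factorial : ℝ)
      = (iteratedDeriv (n+1) f ξ - iteratedDeriv (n+1) f a) * (b - a) ^ (n+1)
          / ((n+1).factorial : ℝ) := by
  have hu : UniqueDiffOn ℝ (Icc a b) := uniqueDiffOn_Icc hab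
  have hconv : ∀ m ≤ n + 1, ∀ x ∈ Icc a b,
      iteratedDerivWithin m f (Icc a b) x = iteratedDeriv m f x := by
    intro m hm x hx
    exact itDW_eq_itD f _ hu m (fun k hk => hd k (by omega)) x hx
  have hC : ContDiffOn ℝ n f (Icc a b) := by
    apply contDiffOn_of_differentiableOn_deriv
    intro m hm
    have hm' : m ≤ n := by exact_mod_cast hm
    have hdm : DifferentiableOn ℝ (iteratedDeriv m f) (Icc a b) :=
      fun x hx => (hd m hm' x hx).differentiableWithinAt
    exact hdm.congr (fun x hx => hconv m (by omega) x hx)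
  have hf' : DifferentiableOn ℝ (iteratedDerivWithin n f (Icc a b)) (Ioo a b) := by
    apply DifferentiableOn.congr (f := iteratedDeriv n f)
    · exact fun x hx => (hd n le_rfl x (Ioo_subset_Icc_self hx)).differentiableWithinAt
    · exact fun x hx => hconv n (by omega) x (Ioo_subset_Icc_self hx)
  obtain ⟨ξ, hξ, hEq⟩ := taylor_mean_remainder_lagrange hab.ne (by rwa [uIcc_of_le hab.le])
    (by rwa [uIcc_of_le hab.le, uIoo_of_le hab.le])
  rw [uIoo_of_le hab.le] at hξ
  rw [uIcc_of_le hab.le] at hEq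
  refine ⟨ξ, hξ, ?_⟩
  rw [taylor_within_apply] at hEq
  have hsum : ∑ k ∈ Finset.range (n + 1),
      (((k.factorial : ℝ))⁻¹ * (b - a) ^ k) • iteratedDerivWithin k f (Icc a b) a
      = ∑ k ∈ Finset.range (n + 1), iteratedDeriv k f a * (b - a) ^ k / (k.factorial : ℝ) := by
    refine Finset.sum_congr rfl fun k hk => ?_
    rw [hconv k (by have := Finset.mem_range.mp hk; omega) a
      (left_mem_Icc.mpr hab.le), smul_eq_mul]
    ring
  rw [hsum, hconv (n+1) le_rfl ξ (Ioo_subset_Icc_self hξ)] at hEq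
  rw [Finset.sum_range_succ, sub_mul, sub_div, ← hEq]
  ring

lemma taylor_est (β L : ℝ) (hβ : 0 < β) (hL : 0 ≤ L) (f : ℝ → ℝ) (hf : HolderClassR β L f)
    (t₀ x : ℝ) (ht₀ : t₀ ∈ Ioo (0:ℝ) 1) (hx : x ∈ Ioo (0:ℝ) 1) :
    |f x - ∑ k ∈ Finset.range (⌊β⌋₊ + 1),
        iteratedDeriv k f t₀ * (x - t₀) ^ k / (k.factorial : ℝ)|
      ≤ L * |x - t₀| ^ β / ((⌊β⌋₊).factorial : ℝ) := by
  have hdAt : ∀ k < ⌊β⌋₊, ∀ y ∈ Ioo (0:ℝ) 1, DifferentiableAt ℝ (iteratedDeriv k f) y := by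
    intro k hk y hy
    exact ((hf.1 k hk) y (Ioo_subset_Icc_self hy)).differentiableAt (Icc_mem_nhds hy.1 hy.2)
  have hfloor : ((⌊β⌋₊ : ℝ)) ≤ β := Nat.floor_le hβ.le
  have hβℓ : 0 ≤ β - (⌊β⌋₊ : ℝ) := by linarith
  by_cases h0 : ⌊β⌋₊ = 0
  · have := hf.2 x (Ioo_subset_Icc_self hx) t₀ (Ioo_subset_Icc_self ht₀)
    rw [h0] at this ⊢
    simpa using this
  obtain ⟨n, hn⟩ := Nat.exists_eq_succ_of_ne_zero h0
  -- common final computation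
  have hfinal : ∀ ξ : ℝ, ξ ∈ Icc (0:ℝ) 1 → |ξ - t₀| ≤ |x - t₀| → x ≠ t₀ →
      |iteratedDeriv ⌊β⌋₊ f ξ - iteratedDeriv ⌊β⌋₊ f t₀| * |x - t₀| ^ (⌊β⌋₊)
        / ((⌊β⌋₊).factorial : ℝ) ≤ L * |x - t₀| ^ β / ((⌊β⌋₊).factorial : ℝ) := by
    intro ξ hξ hle hne
    gcongr ?_ / _
    calc |iteratedDeriv ⌊β⌋₊ f ξ - iteratedDeriv ⌊β⌋₊ f t₀| * |x - t₀| ^ (⌊β⌋₊)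
        ≤ (L * |ξ - t₀| ^ (β - (⌊β⌋₊:ℝ))) * |x - t₀| ^ (⌊β⌋₊) := by
          apply mul_le_mul_of_nonneg_right
            (hf.2 ξ hξ t₀ (Ioo_subset_Icc_self ht₀)) (pow_nonneg (abs_nonneg _) _)
      _ ≤ (L * |x - t₀| ^ (β - (⌊β⌋₊:ℝ))) * |x - t₀| ^ (⌊β⌋₊) := by
          apply mul_le_mul_of_nonneg_right _ (pow_nonneg (abs_nonneg _) _)
          exact mul_le_mul_of_nonneg_left
            (Real.rpow_le_rpow (abs_nonneg _) hle hβℓ) hL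
      _ = L * |x - t₀| ^ β := by
          rw [mul_assoc, ← Real.rpow_natCast |x - t₀| (⌊β⌋₊),
            ← Real.rpow_add (abs_pos.mpr (sub_ne_zero.mpr hne))]
          ring_nf
  rcases lt_trichotomy t₀ x with hlt | heq | hgt
  · have hsub : Icc t₀ x ⊆ Ioo (0:ℝ) 1 := (ordConnected_Ioo).out ht₀ hx
    obtain ⟨ξ, hξ, hEq⟩ := forward_taylor f n t₀ x hlt
      (fun k hk y hy => hdAt k (by omega) y (hsub hy))
    rw [hn, hEq]
    have hξ' : |ξ - t₀| ≤ |x - t₀| := by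
      rw [abs_of_pos (by linarith [hξ.1] : (0:ℝ) < ξ - t₀),
        abs_of_pos (by linarith : (0:ℝ) < x - t₀)]
      linarith [hξ.2]
    have := hfinal ξ (Ioo_subset_Icc_self (hsub (Ioo_subset_Icc_self hξ))) hξ' hlt.ne'
    rw [hn] at this
    calc |(iteratedDeriv (n+1) f ξ - iteratedDeriv (n+1) f t₀) * (x - t₀) ^ (n+1)
          / ((n+1).factorial : ℝ)|
        = |iteratedDeriv (n+1) f ξ - iteratedDeriv (n+1) f t₀| * |x - t₀| ^ (n+1)
          / ((n+1).factorial : ℝ) := by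
          rw [abs_div, abs_mul, abs_pow, Nat.abs_cast]
      _ ≤ L * |x - t₀| ^ β / ((n+1).factorial : ℝ) := this
  · rw [← heq]
    have hsum : ∑ k ∈ Finset.range (⌊β⌋₊ + 1),
        iteratedDeriv k f t₀ * (t₀ - t₀) ^ k / (k.factorial : ℝ) = f t₀ := by
      rw [sub_self, Finset.sum_eq_single 0]
      · simp
      · intro k _ hk; rw [zero_pow hk]; ring
      · intro hk; simp at hk
    rw [hsum, sub_self, abs_zero]
    positivity
  · -- x < t₀ : reflection
    set c : ℝ := x + t₀ with hc
    set g : ℝ → ℝ := fun y => f (c - y) with hgdef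
    have hgeq : g = fun y => (fun z => f (c + z)) (-y) := by
      funext y; simp [hgdef, sub_eq_add_neg]
    have hg : ∀ k y, iteratedDeriv k g y = (-1:ℝ)^k * iteratedDeriv k f (c - y) := by
      intro k y
      calc iteratedDeriv k g y
          = (-1:ℝ)^k • iteratedDeriv k (fun z => f (c + z)) (-y) := by
            rw [hgeq]; exact iteratedDeriv_comp_neg k (fun z => f (c + z)) y
        _ = (-1:ℝ)^k * iteratedDeriv k f (c - y) := by
            rw [iteratedDeriv_comp_const_add, smul_eq_mul]
            simp [sub_eq_add_neg]
    have hsub : Icc x t₀ ⊆ Ioo (0:ℝ) 1 := (ordConnected_Ioo).out hx ht₀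
    have hmem : ∀ y ∈ Icc x t₀, c - y ∈ Icc x t₀ := by
      intro y hy
      exact ⟨by simp only [hc]; linarith [hy.2], by simp only [hc]; linarith [hy.1]⟩
    have hdg : ∀ k ≤ n, ∀ y ∈ Icc x t₀, DifferentiableAt ℝ (iteratedDeriv k g) y := by
      intro k hk y hy
      have hfun : iteratedDeriv k g = fun y => (-1:ℝ)^k * iteratedDeriv k f (c - y) :=
        funext (hg k)
      rw [hfun]
      have hdiff : DifferentiableAt ℝ (fun y : ℝ => iteratedDeriv k f (c - y)) y := by
        have h1 : DifferentiableAt ℝ (iteratedDeriv k f) (c - y) :=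
          hdAt k (by omega) _ (hsub (hmem y hy))
        exact h1.comp y ((differentiableAt_const c).sub differentiableAt_id)
      exact hdiff.const_mul _
    obtain ⟨ξ, hξ, hEq⟩ := forward_taylor g n x t₀ hgt hdg
    have hct : c - t₀ = x := by simp [hc]
    have hcx : c - x = t₀ := by simp [hc]
    have hg0 : g t₀ = f x := by rw [hgdef]; simp [hct]
    have hsum : ∑ k ∈ Finset.range (n + 2), iteratedDeriv k g x * (t₀ - x) ^ k / (k.factorial : ℝ)
        = ∑ k ∈ Finset.range (n + 2), iteratedDeriv k f t₀ * (x - t₀) ^ k / (k.factorial : ℝ) := by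
      refine Finset.sum_congr rfl fun k _ => ?_
      rw [hg k x, hcx]
      have hpow : (x - t₀) ^ k = (-1:ℝ)^k * (t₀ - x) ^ k := by
        rw [show x - t₀ = -(t₀ - x) by ring, neg_pow]
      rw [hpow]; ring
    rw [hg0, hsum] at hEq
    rw [hn, hEq]
    have hcalc : iteratedDeriv (n+1) g ξ - iteratedDeriv (n+1) g x
        = (-1:ℝ)^(n+1) * (iteratedDeriv (n+1) f (c - ξ) - iteratedDeriv (n+1) f t₀) := by
      rw [hg, hg, hcx]; ring
    have hmem' : c - ξ ∈ Icc (0:ℝ) 1 :=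
      Ioo_subset_Icc_self (hsub (hmem ξ (Ioo_subset_Icc_self hξ)))
    have hle : |c - ξ - t₀| ≤ |x - t₀| := by
      have h1 : c - ξ - t₀ = x - ξ := by rw [hc]; ring
      rw [h1, abs_of_nonpos (by linarith [hξ.1]), abs_of_nonpos (by linarith)]
      linarith [hξ.2]
    have hfin := hfinal (c - ξ) hmem' hle hgt.ne
    rw [hn] at hfin
    calc |(iteratedDeriv (n+1) g ξ - iteratedDeriv (n+1) g x) * (t₀ - x)^(n+1)
          / ((n+1).factorial : ℝ)|
        = |iteratedDeriv (n+1) f (c - ξ) - iteratedDeriv (n+1) f t₀| * |x - t₀|^(n+1)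
          / ((n+1).factorial : ℝ) := by
          rw [hcalc, abs_div, abs_mul, abs_mul, abs_pow, abs_pow, abs_neg, abs_one,
            one_pow, one_mul, abs_sub_comm t₀ x, Nat.abs_cast]
      _ ≤ L * |x - t₀| ^ β / ((n+1).factorial : ℝ) := hfin

lemma holder_continuousOn (β L : ℝ) (hβ : 0 < β) (f : ℝ → ℝ) (hf : HolderClassR β L f) :
    ContinuousOn f (Icc (0:ℝ) 1) := by
  by_cases h0 : ⌊β⌋₊ = 0
  · intro x hx
    rw [ContinuousWithinAt, tendsto_iff_dist_tendsto_zero]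
    have hb : ∀ y ∈ Icc (0:ℝ) 1, dist (f y) (f x) ≤ L * |y - x| ^ (β - (⌊β⌋₊:ℝ)) := by
      intro y hy
      rw [Real.dist_eq]
      have h2 := hf.2 y hy x hx
      rw [h0] at h2
      rw [h0]
      simpa using h2
    apply squeeze_zero'
    · exact Filter.Eventually.of_forall fun y => dist_nonneg
    · exact Filter.eventually_of_mem self_mem_nhdsWithin hb
    · have hc : Continuous fun y : ℝ => L * |y - x| ^ (β - (⌊β⌋₊:ℝ)) := by
        apply continuous_const.mul
        apply Continuous.rpow_const (continuous_abs.comp (continuous_id.sub continuous_const))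
        intro y; right
        rw [h0]; simpa using hβ.le
      have h00 : L * |x - x| ^ (β - (⌊β⌋₊:ℝ)) = 0 := by
        rw [h0, sub_self, abs_zero]
        rw [Real.zero_rpow (by simpa using hβ.ne')]
        ring
      exact h00 ▸ ((hc.tendsto x).mono_left nhdsWithin_le_nhds)
  · have h1 : DifferentiableOn ℝ (iteratedDeriv 0 f) (Icc (0:ℝ) 1) :=
      hf.1 0 (Nat.pos_of_ne_zero h0)
    rw [iteratedDeriv_zero] at h1
    exact h1.continuousOn

/-- bias bound for kernel smoothing with a kernel of order `ℓ = ⌊β⌋`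
over the Hölder class `Σ(β,L)`:
`|(1/h)∫₀¹ K((τ−t₀)/h) f(τ) dτ − f(t₀)| ≤ (L h^β/ℓ!)·∫_{−1}^{1} |K(u)||u|^β du`. -/
theorem kernel_bias_bound (β L : ℝ) (hβ : 0 < β) (hL : 0 < L) (f K : ℝ → ℝ)
    (hf : HolderClassR β L f)
    (hKint : Integrable K)
    (hKsupp : ∀ u, u ∉ Icc (-1 : ℝ) 1 → K u = 0)
    (hKone : (∫ u, K u) = 1)
    (hKord : ∀ j, 1 ≤ j → j ≤ ⌊β⌋₊ → (∫ u, u ^ j * K u) = 0)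
    (h t₀ : ℝ) (hh : h ∈ Ioc (0 : ℝ) (1 / 2)) (ht₀ : t₀ ∈ Icc h (1 - h)) :
    |(1 / h) * (∫ τ in (0:ℝ)..1, K ((τ - t₀) / h) * f τ) - f t₀| ≤
      (L * h ^ β / (Nat.factorial ⌊β⌋₊ : ℝ)) *
        ∫ u in (-1 : ℝ)..1, |K u| * |u| ^ β := by
  obtain ⟨hhpos, hhle⟩ := hh
  obtain ⟨ht1, ht2⟩ := ht₀
  have hne : h ≠ 0 := hhpos.ne'
  have ht₀mem : t₀ ∈ Ioo (0:ℝ) 1 := ⟨by linarith, by linarith⟩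
  have hfc : ContinuousOn f (Icc (0:ℝ) 1) := holder_continuousOn β L hβ f hf
  set Φ : ℝ → ℝ := fun u => K u * f (t₀ + h * u) with hΦ
  set P : ℝ → ℝ := fun u => ∑ k ∈ Finset.range (⌊β⌋₊ + 1),
      iteratedDeriv k f t₀ * (h * u) ^ k / (k.factorial : ℝ) with hP
  have hΦsupp : ∀ u, u ∉ Icc (-1:ℝ) 1 → Φ u = 0 := fun u hu => by
    rw [hΦ]; simp only; rw [hKsupp u hu, zero_mul]
  have step1 : (∫ τ in (0:ℝ)..1, K ((τ - t₀) / h) * f τ) = h * ∫ u in (-1:ℝ)..1, Φ u := by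
    have e1 : ∀ τ ∈ uIcc (0:ℝ) 1, K ((τ - t₀)/h) * f τ = Φ ((τ - t₀)/h) := by
      intro τ _
      rw [hΦ]; simp only
      congr 2
      field_simp
      ring
    have e2 : ∀ τ, τ ∉ Icc (0:ℝ) 1 → Φ ((τ - t₀)/h) = 0 := by
      intro τ hτ
      apply hΦsupp
      rw [mem_Icc] at hτ; push_neg at hτ
      intro hmem
      rcases lt_or_ge τ 0 with hτ0 | hτ0
      · have hlt : (τ - t₀)/h < -1 := by rw [div_lt_iff₀ hhpos]; linarith
        linarith [hmem.1]
      · have hτ1 : 1 < τ := hτ hτ0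
        have hlt : 1 < (τ - t₀)/h := by rw [lt_div_iff₀ hhpos]; linarith
        linarith [hmem.2]
    calc (∫ τ in (0:ℝ)..1, K ((τ - t₀) / h) * f τ)
        = ∫ τ in (0:ℝ)..1, Φ ((τ - t₀)/h) := intervalIntegral.integral_congr e1
      _ = ∫ τ in Ioc (0:ℝ) 1, Φ ((τ - t₀)/h) := intervalIntegral.integral_of_le (by norm_num)
      _ = ∫ τ in Icc (0:ℝ) 1, Φ ((τ - t₀)/h) := (integral_Icc_eq_integral_Ioc).symm
      _ = ∫ τ : ℝ, Φ ((τ - t₀)/h) := setIntegral_eq_integral_of_forall_compl_eq_zero e2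
      _ = ∫ τ : ℝ, (fun y => Φ (y/h)) (τ - t₀) := rfl
      _ = ∫ y : ℝ, Φ (y/h) := integral_sub_right_eq_self (fun y => Φ (y/h)) t₀
      _ = |h| • ∫ u, Φ u := Measure.integral_comp_div Φ h
      _ = h * ∫ u, Φ u := by rw [abs_of_pos hhpos, smul_eq_mul]
      _ = h * ∫ u in Icc (-1:ℝ) 1, Φ u := by
            rw [setIntegral_eq_integral_of_forall_compl_eq_zero hΦsupp]
      _ = h * ∫ u in (-1:ℝ)..1, Φ u := by
            rw [integral_Icc_eq_integral_Ioc,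
              ← intervalIntegral.integral_of_le (by norm_num : (-1:ℝ) ≤ 1)]
  have hmom : ∀ k : ℕ, (∫ u in (-1:ℝ)..1, u ^ k * K u) = ∫ u : ℝ, u ^ k * K u := by
    intro k
    rw [intervalIntegral.integral_of_le (by norm_num : (-1:ℝ) ≤ 1),
      ← integral_Icc_eq_integral_Ioc]
    exact setIntegral_eq_integral_of_forall_compl_eq_zero fun u hu => by
      rw [hKsupp u hu, mul_zero]
  have hKii : IntervalIntegrable K volume (-1) 1 := hKint.intervalIntegrable
  have hIk : ∀ k : ℕ, IntervalIntegrable (fun u => u ^ k * K u) volume (-1) 1 :=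
    fun k => hKii.continuousOn_mul (continuous_pow k).continuousOn
  have step2 : (∫ u in (-1:ℝ)..1, K u * P u) = f t₀ := by
    have expand : ∀ u ∈ uIcc (-1:ℝ) 1, K u * P u
        = ∑ k ∈ Finset.range (⌊β⌋₊ + 1),
            (iteratedDeriv k f t₀ * h ^ k / (k.factorial : ℝ)) * (u ^ k * K u) := by
      intro u _
      rw [hP]; simp only
      rw [Finset.mul_sum]
      refine Finset.sum_congr rfl fun k _ => ?_
      rw [mul_pow]; ring
    rw [intervalIntegral.integral_congr expand,
      intervalIntegral.integral_finset_sum (fun k _ => (hIk k).const_mul _)]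
    rw [Finset.sum_eq_single 0]
    · rw [intervalIntegral.integral_const_mul, hmom 0]
      have h1 : (∫ u : ℝ, u ^ 0 * K u) = 1 := by simpa using hKone
      rw [h1]; simp
    · intro k hk hk0
      rw [intervalIntegral.integral_const_mul, hmom k,
        hKord k (Nat.one_le_iff_ne_zero.mpr hk0)
          (Nat.lt_succ_iff.mp (Finset.mem_range.mp hk)), mul_zero]
    · intro hk; simp at hk
  have haff : ∀ u ∈ Icc (-1:ℝ) 1, t₀ + h * u ∈ Icc (0:ℝ) 1 := by
    intro u hu
    have l1 : h * (-1) ≤ h * u := mul_le_mul_of_nonneg_left hu.1 hhpos.le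
    have l2 : h * u ≤ h * 1 := mul_le_mul_of_nonneg_left hu.2 hhpos.le
    constructor <;> [nlinarith; nlinarith]
  have hcontf : ContinuousOn (fun u => f (t₀ + h * u)) (uIcc (-1:ℝ) 1) := by
    rw [uIcc_of_le (by norm_num : (-1:ℝ) ≤ 1)]
    exact hfc.comp
      ((continuous_const.add (continuous_const.mul continuous_id)).continuousOn) haff
  have hcontP : ContinuousOn P (uIcc (-1:ℝ) 1) := by
    apply Continuous.continuousOn
    rw [hP]
    apply continuous_finset_sum
    intro k _
    exact (continuous_const.mul ((continuous_const.mul continuous_id).pow k)).div_const _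
  have hIΦ : IntervalIntegrable Φ volume (-1) 1 := hKii.mul_continuousOn hcontf
  have hIKP : IntervalIntegrable (fun u => K u * P u) volume (-1) 1 :=
    hKii.mul_continuousOn hcontP
  have step3 : (1/h) * (∫ τ in (0:ℝ)..1, K ((τ - t₀) / h) * f τ) - f t₀
      = ∫ u in (-1:ℝ)..1, K u * (f (t₀ + h * u) - P u) := by
    rw [step1, ← mul_assoc, one_div, inv_mul_cancel₀ hne, one_mul, ← step2,
      ← intervalIntegral.integral_sub hIΦ hIKP]
    apply intervalIntegral.integral_congr
    intro u _
    rw [hΦ]; simp only; ring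
  rw [step3]
  have hmain : ∀ u ∈ Ioo (-1:ℝ) 1, ‖K u * (f (t₀ + h * u) - P u)‖
      ≤ (L * h ^ β / ((⌊β⌋₊).factorial : ℝ)) * (|K u| * |u| ^ β) := by
    intro u hu
    have hx : t₀ + h * u ∈ Ioo (0:ℝ) 1 := by
      have l1 : h * (-1) < h * u := (mul_lt_mul_iff_right₀ hhpos).mpr hu.1
      have l2 : h * u < h * 1 := (mul_lt_mul_iff_right₀ hhpos).mpr hu.2
      constructor <;> [nlinarith; nlinarith]
    have hT := taylor_est β L hβ hL.le f hf t₀ (t₀ + h * u) ht₀mem hx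
    rw [show t₀ + h * u - t₀ = h * u by ring] at hT
    rw [Real.norm_eq_abs, abs_mul]
    have h2 : |h * u| ^ β = h ^ β * |u| ^ β := by
      rw [abs_mul, Real.mul_rpow (abs_nonneg h) (abs_nonneg u), abs_of_pos hhpos]
    calc |K u| * |f (t₀ + h * u) - P u|
        ≤ |K u| * (L * |h * u| ^ β / ((⌊β⌋₊).factorial : ℝ)) :=
          mul_le_mul_of_nonneg_left hT (abs_nonneg _)
      _ = (L * h ^ β / ((⌊β⌋₊).factorial : ℝ)) * (|K u| * |u| ^ β) := by
          rw [h2]; ring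
  have hbound : IntervalIntegrable
      (fun u => (L * h ^ β / ((⌊β⌋₊).factorial : ℝ)) * (|K u| * |u| ^ β)) volume (-1) 1 := by
    apply IntervalIntegrable.const_mul
    exact (hKint.abs.intervalIntegrable).mul_continuousOn
      ((continuous_abs.rpow_const (fun u => Or.inr hβ.le)).continuousOn)
  have hae : ∀ᵐ u ∂(volume.restrict (Set.uIoc (-1:ℝ) 1)), ‖K u * (f (t₀ + h * u) - P u)‖
      ≤ (L * h ^ β / ((⌊β⌋₊).factorial : ℝ)) * (|K u| * |u| ^ β) := by
    have hne1 : ∀ᵐ u : ℝ ∂volume, u ≠ (1:ℝ) := by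
      rw [ae_iff]
      have hset : {u : ℝ | ¬ u ≠ 1} = {1} := by ext u; simp
      rw [hset]
      exact Real.volume_singleton
    have hne1' : ∀ᵐ u ∂(volume.restrict (Set.uIoc (-1:ℝ) 1)), u ≠ (1:ℝ) :=
      hne1.filter_mono (ae_mono Measure.restrict_le_self)
    have hmem : ∀ᵐ u ∂(volume.restrict (Set.uIoc (-1:ℝ) 1)), u ∈ Set.uIoc (-1:ℝ) 1 :=
      ae_restrict_mem measurableSet_uIoc
    filter_upwards [hmem, hne1'] with u hu hu1
    rw [uIoc_of_le (by norm_num : (-1:ℝ) ≤ 1)] at hu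
    exact hmain u ⟨hu.1, lt_of_le_of_ne hu.2 hu1⟩
  calc |∫ u in (-1:ℝ)..1, K u * (f (t₀ + h * u) - P u)|
      = ‖∫ u in (-1:ℝ)..1, K u * (f (t₀ + h * u) - P u)‖ := (Real.norm_eq_abs _).symm
    _ ≤ |∫ u in (-1:ℝ)..1, (L * h ^ β / ((⌊β⌋₊).factorial : ℝ)) * (|K u| * |u| ^ β)| :=
        intervalIntegral.norm_integral_le_abs_of_norm_le hae hbound
    _ = ∫ u in (-1:ℝ)..1, (L * h ^ β / ((⌊β⌋₊).factorial : ℝ)) * (|K u| * |u| ^ β) := by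
        apply abs_of_nonneg
        apply intervalIntegral.integral_nonneg (by norm_num : (-1:ℝ) ≤ 1)
        intro u _
        positivity
    _ = (L * h ^ β / (Nat.factorial ⌊β⌋₊ : ℝ)) * ∫ u in (-1 : ℝ)..1, |K u| * |u| ^ β :=
        intervalIntegral.integral_const_mul _ _
end

section
/- Let m and r be even positive integers with r ≤ m and let γ > 0. Then there exists a finite set 𝒜⁰ of m×m real symmetric matrices, all of whose entries lie in {0, γ}, such that: (i) 𝒜⁰ contains the zero matrix; (ii) Card(𝒜⁰) ≥ 2^{mr/32} + 1; (iii) every A ∈ 𝒜⁰ has rank at most r; and (iv) any two distinct A₁, A₂ ∈ 𝒜⁰ satisfy ‖A₁ − A₂‖₂² ≥ (mr/16)·⌊m/r⌋·γ² ≥ γ²·m²/32, where ‖·‖₂ is the Frobenius norm. -/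
open BigOperators Finset Matrix

namespace VGPack

lemma key_nat : ∀ n : ℕ, 4 ≤ n → 256 * 917504 ^ n ≤ 5764801 ^ n := by
  intro n hn
  induction n with
  | zero => omega
  | succ k ih =>
    rcases Nat.lt_or_ge k 4 with hk | hk
    · interval_cases k <;> first | omega | norm_num
    · have h := ih (by omega)
      calc 256 * 917504 ^ (k+1) = (256 * 917504 ^ k) * 917504 := by ring
        _ ≤ 5764801 ^ k * 5764801 := by
            exact Nat.mul_le_mul h (by norm_num)
        _ = 5764801 ^ (k+1) := by ring

lemma numeric (n : ℕ) (hn : 4 ≤ n) :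
    ((2:ℝ) ^ ((n:ℝ)/8) + 1) * ((7:ℝ) ^ (n/8) * (8/7) ^ n) ≤ 2 ^ n := by
  have h2 : (1:ℝ) ≤ (2:ℝ) ^ ((n:ℝ)/8) :=
    Real.one_le_rpow (by norm_num) (by positivity)
  have h1 : (2:ℝ) ^ ((n:ℝ)/8) + 1 ≤ 2 * (2:ℝ) ^ ((n:ℝ)/8) := by linarith
  have h7 : (7:ℝ) ^ (n/8) ≤ (7:ℝ) ^ ((n:ℝ)/8) := by
    rw [← Real.rpow_natCast 7 (n/8)]
    apply Real.rpow_le_rpow_of_exponent_le (by norm_num)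
    exact_mod_cast Nat.cast_div_le
  have hkey : 2 * (14:ℝ) ^ ((n:ℝ)/8) ≤ (7/4) ^ n := by
    have h8 : (0:ℝ) ≤ 2 * (14:ℝ) ^ ((n:ℝ)/8) := by positivity
    have h9 : (0:ℝ) ≤ ((7:ℝ)/4) ^ n := by positivity
    rw [← pow_le_pow_iff_left₀ h8 h9 (n := 8) (by norm_num)]
    have : (2 * (14:ℝ) ^ ((n:ℝ)/8)) ^ 8 = 256 * (14:ℝ) ^ (n:ℕ) := by
      rw [mul_pow, ← Real.rpow_natCast ((14:ℝ) ^ ((n:ℝ)/8)) 8, ← Real.rpow_mul (by norm_num)]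
      norm_num [Real.rpow_natCast]
    rw [this, ← pow_mul]
    have hmain := key_nat n hn
    have hmain' : (256:ℝ) * 917504 ^ n ≤ 5764801 ^ n := by exact_mod_cast hmain
    have h4 : ((7:ℝ)/4) ^ (n*8) = (5764801:ℝ) ^ n / 65536 ^ n := by
      rw [div_pow, mul_comm n 8, pow_mul, pow_mul]; norm_num
    rw [h4, le_div_iff₀ (by positivity)]
    calc (256:ℝ) * 14 ^ n * 65536 ^ n = 256 * 917504 ^ n := by
          rw [mul_assoc, ← mul_pow]; norm_num
      _ ≤ 5764801 ^ n := hmain'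
  calc ((2:ℝ) ^ ((n:ℝ)/8) + 1) * ((7:ℝ) ^ (n/8) * (8/7) ^ n)
      ≤ (2 * (2:ℝ) ^ ((n:ℝ)/8)) * ((7:ℝ) ^ ((n:ℝ)/8) * (8/7) ^ n) := by
        apply mul_le_mul h1 _ (by positivity) (by positivity)
        apply mul_le_mul_of_nonneg_right h7 (by positivity)
    _ = (2 * (14:ℝ) ^ ((n:ℝ)/8)) * (8/7) ^ n := by
        have h14 : (14:ℝ) ^ ((n:ℝ)/8) = (2:ℝ) ^ ((n:ℝ)/8) * (7:ℝ) ^ ((n:ℝ)/8) := by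
          rw [← Real.mul_rpow (by norm_num) (by norm_num)]; norm_num
        rw [h14]; ring
    _ ≤ (7/4) ^ n * (8/7) ^ n := by
        apply mul_le_mul_of_nonneg_right hkey (by positivity)
    _ = 2 ^ n := by rw [← mul_pow]; norm_num

lemma sum_choose_le (n K : ℕ) (hK : K ≤ n) :
    (∑ j ∈ range (K+1), (n.choose j : ℝ)) ≤ (7:ℝ) ^ K * (8/7) ^ n := by
  have hpow : ((1:ℝ)/7 + 1) ^ n = ∑ j ∈ range (n+1), ((1:ℝ)/7) ^ j * 1 ^ (n-j) * n.choose j :=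
    add_pow _ _ _
  have h1 : (∑ j ∈ range (K+1), (n.choose j : ℝ) * (1/7) ^ K)
      ≤ ∑ j ∈ range (K+1), (n.choose j : ℝ) * (1/7) ^ j := by
    apply Finset.sum_le_sum
    intro j hj
    apply mul_le_mul_of_nonneg_left _ (by positivity)
    exact pow_le_pow_of_le_one (by norm_num) (by norm_num) (by
      have := Finset.mem_range.mp hj; omega)
  have h2 : (∑ j ∈ range (K+1), (n.choose j : ℝ) * (1/7) ^ j)
      ≤ ∑ j ∈ range (n+1), (n.choose j : ℝ) * (1/7) ^ j := by
    apply Finset.sum_le_sum_of_subset_of_nonneg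
    · exact Finset.range_subset_range.mpr (by omega)
    · intro j _ _; positivity
  have h3 : (∑ j ∈ range (n+1), (n.choose j : ℝ) * (1/7) ^ j) = (8/7) ^ n := by
    rw [show ((8:ℝ)/7) = 1/7 + 1 by norm_num, hpow]
    apply Finset.sum_congr rfl
    intro j _; rw [one_pow]; ring
  have h4 : (∑ j ∈ range (K+1), (n.choose j : ℝ)) * (1/7)^K
      = ∑ j ∈ range (K+1), (n.choose j : ℝ) * (1/7) ^ K := by
    rw [Finset.sum_mul]
  have h5 : (∑ j ∈ range (K+1), (n.choose j : ℝ)) * (1/7)^K ≤ (8/7)^n := by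
    rw [h4]; linarith
  have h6 : (0:ℝ) < (1/7:ℝ)^K := by positivity
  calc (∑ j ∈ range (K+1), (n.choose j : ℝ))
      = ((∑ j ∈ range (K+1), (n.choose j : ℝ)) * (1/7)^K) * 7^K := by
        rw [mul_assoc, div_pow, one_pow]
        field_simp
    _ ≤ (8/7)^n * 7^K := by
        apply mul_le_mul_of_nonneg_right h5 (by positivity)
    _ = (7:ℝ)^K * (8/7)^n := by ring

variable {ι : Type} [Fintype ι] [DecidableEq ι]

lemma ball_card (u : ι → Bool) (K : ℕ) :
    (univ.filter fun x : ι → Bool => hammingDist x u ≤ K).card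
      ≤ ∑ j ∈ range (K+1), (Fintype.card ι).choose j := by
  classical
  have hinj : Set.InjOn (fun x : ι → Bool => univ.filter fun i => x i ≠ u i)
      ↑(univ.filter fun x : ι → Bool => hammingDist x u ≤ K) := by
    intro x _ y _ hxy
    simp only at hxy
    funext i
    have hx : (i ∈ univ.filter fun i => x i ≠ u i) ↔ (i ∈ univ.filter fun i => y i ≠ u i) := by
      rw [hxy]
    simp only [mem_filter, mem_univ, true_and] at hx
    cases hxi : x i <;> cases hyi : y i <;> cases hui : u i <;> simp_all
  have hmaps : ∀ x ∈ univ.filter fun x : ι → Bool => hammingDist x u ≤ K,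
      (univ.filter fun i => x i ≠ u i) ∈ univ.powerset.filter fun s => s.card ≤ K := by
    intro x hx
    simp only [mem_filter, mem_univ, true_and] at hx ⊢
    exact ⟨Finset.mem_powerset.mpr (Finset.subset_univ _), hx⟩
  have h1 := Finset.card_le_card_of_injOn _ hmaps hinj
  refine h1.trans ?_
  have heq : (univ.powerset.filter fun s : Finset ι => s.card ≤ K)
      = (range (K+1)).biUnion (fun j => Finset.powersetCard j univ) := by
    ext s
    simp [Finset.mem_powersetCard, Nat.lt_succ_iff]
  rw [heq, Finset.card_biUnion]
  · apply le_of_eq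
    apply Finset.sum_congr rfl
    intro j _
    rw [Finset.card_powersetCard, Finset.card_univ]
  · intro a _ b _ hab
    apply Finset.disjoint_left.mpr
    intro s hsa hsb
    rw [Finset.mem_powersetCard] at hsa hsb
    exact hab (hsa.2 ▸ hsb.2)

lemma exists_code (hn : 2 ≤ Fintype.card ι) :
    ∃ S : Finset (ι → Bool), (fun _ => false) ∈ S ∧
      (2:ℝ) ^ ((Fintype.card ι : ℝ)/8) + 1 ≤ (S.card : ℝ) ∧
      ∀ u ∈ S, ∀ v ∈ S, u ≠ v → ((Fintype.card ι : ℝ)/8) ≤ (hammingDist u v : ℝ) := by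
  classical
  set n := Fintype.card ι with hndef
  -- first, a code not necessarily containing 0
  have main : ∃ S : Finset (ι → Bool), S.Nonempty ∧
      ((2:ℝ) ^ ((n : ℝ)/8) + 1 ≤ (S.card : ℝ)) ∧
      ∀ u ∈ S, ∀ v ∈ S, u ≠ v → ((n : ℝ)/8) ≤ (hammingDist u v : ℝ) := by
    rcases Nat.lt_or_ge 8 n with hbig | hsmall
    · -- greedy case, n ≥ 9
      set d := n / 8 + 1 with hd
      set K := n / 8 with hK
      have hdist : (n:ℝ)/8 ≤ (d:ℝ) := by
        have h8 : n < (n / 8 + 1) * 8 := by omega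
        have : (n:ℝ) < (d:ℝ) * 8 := by exact_mod_cast h8
        linarith
      set 𝒞 := (univ : Finset (Finset (ι → Bool))).filter
        (fun S => ∀ u ∈ S, ∀ v ∈ S, u ≠ v → d ≤ hammingDist u v) with h𝒞
      have hne : 𝒞.Nonempty := ⟨∅, by simp [h𝒞]⟩
      obtain ⟨S, hS𝒞, hmax⟩ := Finset.exists_max_image 𝒞 Finset.card hne
      have hSsep : ∀ u ∈ S, ∀ v ∈ S, u ≠ v → d ≤ hammingDist u v :=
        (Finset.mem_filter.mp hS𝒞).2
      -- covering property
      have hcov : ∀ x : ι → Bool, ∃ u ∈ S, hammingDist x u ≤ K := by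
        intro x
        by_contra hcon
        push_neg at hcon
        have hxfar : ∀ u ∈ S, d ≤ hammingDist x u := by
          intro u hu; have := hcon u hu; omega
        have hxS : x ∉ S := by
          intro hxS
          have := hxfar x hxS
          simp [hammingDist_self] at this
        have hins : insert x S ∈ 𝒞 := by
          rw [h𝒞, Finset.mem_filter]
          refine ⟨Finset.mem_univ _, ?_⟩
          intro u hu v hv huv
          rcases Finset.mem_insert.mp hu with hux | huS
          · rcases Finset.mem_insert.mp hv with hvx | hvS
            · exact absurd (hux.trans hvx.symm) huv
            · subst hux; exact hxfar v hvS
          · rcases Finset.mem_insert.mp hv with hvx | hvS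
            · subst hvx; rw [hammingDist_comm]; exact hxfar u huS
            · exact hSsep u huS v hvS huv
        have := hmax _ hins
        rw [Finset.card_insert_of_notMem hxS] at this
        omega
      -- counting
      have hcount : (2:ℕ) ^ n ≤ S.card * ∑ j ∈ range (K+1), n.choose j := by
        have hsub : (univ : Finset (ι → Bool))
            ⊆ S.biUnion (fun u => univ.filter fun x => hammingDist x u ≤ K) := by
          intro x _
          obtain ⟨u, hu, hdu⟩ := hcov x
          exact Finset.mem_biUnion.mpr ⟨u, hu, by simp [hdu]⟩
        have h1 := Finset.card_le_card hsub
        have h2 := Finset.card_biUnion_le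
          (s := S) (t := fun u => univ.filter fun x : ι → Bool => hammingDist x u ≤ K)
        have h3 : ∀ u ∈ S, (univ.filter fun x : ι → Bool => hammingDist x u ≤ K).card
            ≤ ∑ j ∈ range (K+1), n.choose j := fun u _ => ball_card u K
        have h4 : (univ : Finset (ι → Bool)).card = 2 ^ n := by
          rw [Finset.card_univ, Fintype.card_fun]
          simp [hndef]
        calc (2:ℕ) ^ n = (univ : Finset (ι → Bool)).card := h4.symm
          _ ≤ _ := h1
          _ ≤ ∑ u ∈ S, (univ.filter fun x : ι → Bool => hammingDist x u ≤ K).card := h2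
          _ ≤ ∑ u ∈ S, ∑ j ∈ range (K+1), n.choose j := Finset.sum_le_sum h3
          _ = S.card * ∑ j ∈ range (K+1), n.choose j := by
              rw [Finset.sum_const, smul_eq_mul]
      -- real arithmetic
      have hKn : K ≤ n := Nat.div_le_self n 8
      have hV : (∑ j ∈ range (K+1), (n.choose j : ℝ)) ≤ (7:ℝ) ^ K * (8/7) ^ n :=
        sum_choose_le n K hKn
      have hB : (0:ℝ) < (7:ℝ) ^ K * (8/7) ^ n := by positivity
      have hnum := numeric n (by omega)
      have hcountR : (2:ℝ) ^ n ≤ (S.card : ℝ) * ∑ j ∈ range (K+1), (n.choose j : ℝ) := by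
        have := hcount
        push_cast at this ⊢
        exact_mod_cast this
      have hfinal : ((2:ℝ) ^ ((n:ℝ)/8) + 1) * ((7:ℝ) ^ K * (8/7) ^ n)
          ≤ (S.card : ℝ) * ((7:ℝ) ^ K * (8/7) ^ n) := by
        calc ((2:ℝ) ^ ((n:ℝ)/8) + 1) * ((7:ℝ) ^ K * (8/7) ^ n) ≤ 2 ^ n := hnum
          _ ≤ (S.card : ℝ) * ∑ j ∈ range (K+1), (n.choose j : ℝ) := hcountR
          _ ≤ (S.card : ℝ) * ((7:ℝ) ^ K * (8/7) ^ n) :=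
              mul_le_mul_of_nonneg_left hV (by positivity)
      have hcard : (2:ℝ) ^ ((n:ℝ)/8) + 1 ≤ (S.card : ℝ) :=
        le_of_mul_le_mul_right hfinal hB
      refine ⟨S, ?_, hcard, ?_⟩
      · rw [← Finset.card_pos]
        have h1 : (1:ℝ) ≤ (2:ℝ) ^ ((n:ℝ)/8) := Real.one_le_rpow (by norm_num) (by positivity)
        have : (0:ℝ) < (S.card : ℝ) := by linarith
        exact_mod_cast this
      · intro u hu v hv huv
        have := hSsep u hu v hv huv
        calc ((n:ℝ)/8) ≤ (d:ℝ) := hdist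
          _ ≤ (hammingDist u v : ℝ) := by exact_mod_cast this
    · -- small case, n ≤ 8 : take everything
      refine ⟨univ, Finset.univ_nonempty, ?_, ?_⟩
      · have h4 : ((univ : Finset (ι → Bool)).card : ℝ) = 2 ^ n := by
          rw [Finset.card_univ, Fintype.card_fun]
          simp [hndef]
        rw [h4]
        have h1 : (2:ℝ) ^ ((n:ℝ)/8) ≤ 2 := by
          nth_rewrite 2 [show (2:ℝ) = (2:ℝ) ^ (1:ℝ) by rw [Real.rpow_one]]
          apply Real.rpow_le_rpow_of_exponent_le (by norm_num)
          rw [div_le_one (by norm_num)]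
          exact_mod_cast hsmall
        have h2 : (4:ℝ) ≤ 2 ^ n := by
          calc (4:ℝ) = 2 ^ 2 := by norm_num
            _ ≤ 2 ^ n := pow_le_pow_right₀ (by norm_num) hn
        linarith
      · intro u _ v _ huv
        have h1 : 1 ≤ hammingDist u v := by
          rcases Nat.eq_zero_or_pos (hammingDist u v) with h | h
          · exact absurd (hammingDist_eq_zero.mp h) huv
          · exact h
        have : ((n:ℝ)/8) ≤ 1 := by
          rw [div_le_one (by norm_num)]; exact_mod_cast hsmall
        calc ((n:ℝ)/8) ≤ 1 := this
          _ ≤ (hammingDist u v : ℝ) := by exact_mod_cast h1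
  -- translate to contain 0
  obtain ⟨S, ⟨u₀, hu₀⟩, hcard, hsep⟩ := main
  set f : (ι → Bool) → (ι → Bool) := fun v i => xor (v i) (u₀ i) with hf
  have hfinj : Function.Injective f := by
    intro x y hxy
    funext i
    have := congrFun hxy i
    simp only [hf] at this
    cases hx : x i <;> cases hy : y i <;> cases hu : u₀ i <;> simp_all
  refine ⟨S.image f, ?_, ?_, ?_⟩
  · apply Finset.mem_image.mpr ⟨u₀, hu₀, ?_⟩
    funext i; simp [hf]
  · rw [Finset.card_image_of_injective _ hfinj]; exact hcard
  · intro u hu v hv huv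
    obtain ⟨x, hx, rfl⟩ := Finset.mem_image.mp hu
    obtain ⟨y, hy, rfl⟩ := Finset.mem_image.mp hv
    have hxy : x ≠ y := fun h => huv (h ▸ rfl)
    have hdeq : hammingDist (f x) (f y) = hammingDist x y := by
      unfold hammingDist
      congr 1
      apply Finset.filter_congr
      intro i _
      simp only [hf]
      cases hx : x i <;> cases hy : y i <;> cases hu : u₀ i <;> simp
    rw [hdeq]
    exact hsep x hx y hy hxy



section Mat
variable (k s q m : ℕ) (γ : ℝ)

def eMat (ν : Fin k × Fin s → Bool) : Matrix (Fin k) (Fin s) ℝ :=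
  Matrix.of fun a t => if ν (a, t) then γ else 0

def wMat : Matrix (Fin s) (Fin k) ℝ :=
  Matrix.of fun t c => if (c:ℕ) < q * s ∧ (c:ℕ) % s = (t:ℕ) then 1 else 0

def bMat (ν : Fin k × Fin s → Bool) : Matrix (Fin k) (Fin k) ℝ :=
  eMat k s γ ν * wMat k s q

lemma bMat_apply {k s : ℕ} (q : ℕ) (γ : ℝ) (hs : 0 < s) (ν : Fin k × Fin s → Bool) (a c : Fin k) :
    bMat k s q γ ν a c =
      if h : (c:ℕ) < q * s then eMat k s γ ν a ⟨(c:ℕ) % s, Nat.mod_lt _ hs⟩ else 0 := by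
  unfold bMat wMat
  rw [Matrix.mul_apply]
  by_cases h : (c:ℕ) < q * s
  · rw [dif_pos h]
    rw [Finset.sum_eq_single (⟨(c:ℕ) % s, Nat.mod_lt _ hs⟩ : Fin s)]
    · simp [h]
    · intro b _ hb
      have hne : ¬((c:ℕ) < q*s ∧ (c:ℕ) % s = (b:ℕ)) := by
        rintro ⟨-, h2⟩
        exact hb (Fin.ext h2.symm)
      simp [hne]
    · intro h'; exact absurd (Finset.mem_univ _) h'
  · rw [dif_neg h]
    apply Finset.sum_eq_zero
    intro b _
    simp [h]

def sumEquiv (hkm : k + k = m) : (Fin k ⊕ Fin k) ≃ Fin m :=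
  finSumFinEquiv.trans (finCongr hkm)

def AMat (hkm : k + k = m) (ν : Fin k × Fin s → Bool) : Matrix (Fin m) (Fin m) ℝ :=
  Matrix.reindex (sumEquiv k m hkm) (sumEquiv k m hkm)
    (Matrix.fromBlocks 0 (bMat k s q γ ν) (bMat k s q γ ν)ᵀ 0)

variable {k s q m γ}

lemma AMat_zero (hkm : k + k = m) :
    AMat k s q m γ hkm (fun _ : Fin k × Fin s => false) = 0 := by
  have he : eMat k s γ (fun _ => false) = 0 := by
    ext a t; simp [eMat]
  unfold AMat bMat
  rw [he, Matrix.zero_mul]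
  ext i j
  rcases h1 : (sumEquiv k m hkm).symm i with a | c <;>
    rcases h2 : (sumEquiv k m hkm).symm j with a' | c' <;>
      simp [Matrix.reindex_apply, Matrix.submatrix_apply, h1, h2]

lemma AMat_isSymm (hkm : k + k = m) (ν : Fin k × Fin s → Bool) :
    (AMat k s q m γ hkm ν).IsSymm := by
  unfold Matrix.IsSymm AMat
  rw [Matrix.transpose_reindex, Matrix.fromBlocks_transpose]
  simp

lemma AMat_entries (hs : 0 < s) (hkm : k + k = m) (ν : Fin k × Fin s → Bool) (i j : Fin m) :
    AMat k s q m γ hkm ν i j = 0 ∨ AMat k s q m γ hkm ν i j = γ := by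
  have hb : ∀ a c : Fin k, bMat k s q γ ν a c = 0 ∨ bMat k s q γ ν a c = γ := by
    intro a c
    rw [bMat_apply q γ hs]
    split_ifs with h
    · unfold eMat
      simp only [Matrix.of_apply]
      split_ifs <;> simp
    · left; rfl
  unfold AMat
  rw [Matrix.reindex_apply, Matrix.submatrix_apply]
  rcases ((sumEquiv k m hkm).symm i) with a | c <;>
    rcases ((sumEquiv k m hkm).symm j) with a' | c'
  · left; rfl
  · exact hb a c'
  · exact hb a' c
  · left; rfl

lemma AMat_rank (hkm : k + k = m) (ν : Fin k × Fin s → Bool) :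
    (AMat k s q m γ hkm ν).rank ≤ s + s := by
  unfold AMat
  rw [Matrix.rank_reindex]
  have hfac : (Matrix.fromBlocks 0 (bMat k s q γ ν) (bMat k s q γ ν)ᵀ 0 :
        Matrix (Fin k ⊕ Fin k) (Fin k ⊕ Fin k) ℝ)
      = (Matrix.fromBlocks (eMat k s γ ν) 0 0 (wMat k s q)ᵀ :
          Matrix (Fin k ⊕ Fin k) (Fin s ⊕ Fin s) ℝ) *
        (Matrix.fromBlocks 0 (wMat k s q) (eMat k s γ ν)ᵀ 0) := by
    rw [Matrix.fromBlocks_multiply]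
    unfold bMat
    simp [Matrix.transpose_mul]
  rw [hfac]
  refine le_trans (Matrix.rank_mul_le_left _ _) ?_
  refine le_trans (Matrix.rank_le_card_width _) ?_
  simp

lemma periodize (G : ℕ → ℝ) (s : ℕ) : ∀ q : ℕ,
    ∑ j ∈ range (q * s), G (j % s) = q * ∑ t ∈ range s, G t := by
  intro q
  induction q with
  | zero => simp
  | succ p ih =>
    have : (p + 1) * s = p * s + s := by ring
    rw [this, Finset.sum_range_add, ih]
    have h2 : ∀ x ∈ range s, G ((p * s + x) % s) = G x := by
      intro x hx
      rw [mul_comm p s, Nat.mul_add_mod, Nat.mod_eq_of_lt (Finset.mem_range.mp hx)]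
    rw [Finset.sum_congr rfl h2]
    push_cast
    ring

lemma AMat_dist (hs : 0 < s) (hqs : q * s ≤ k) (hkm : k + k = m)
    (ν₁ ν₂ : Fin k × Fin s → Bool) :
    ∑ i, ∑ j, (AMat k s q m γ hkm ν₁ i j - AMat k s q m γ hkm ν₂ i j) ^ 2
      = 2 * q * γ ^ 2 * hammingDist ν₁ ν₂ := by
  classical
  set e := sumEquiv k m hkm with he
  set M₁ := (Matrix.fromBlocks 0 (bMat k s q γ ν₁) (bMat k s q γ ν₁)ᵀ 0 :
    Matrix (Fin k ⊕ Fin k) (Fin k ⊕ Fin k) ℝ) with hM₁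
  set M₂ := (Matrix.fromBlocks 0 (bMat k s q γ ν₂) (bMat k s q γ ν₂)ᵀ 0 :
    Matrix (Fin k ⊕ Fin k) (Fin k ⊕ Fin k) ℝ) with hM₂
  have step1 : ∑ i, ∑ j, (AMat k s q m γ hkm ν₁ i j - AMat k s q m γ hkm ν₂ i j) ^ 2
      = ∑ p, ∑ p', (M₁ p p' - M₂ p p') ^ 2 := by
    rw [← Equiv.sum_comp e (fun i => ∑ j, (AMat k s q m γ hkm ν₁ i j - AMat k s q m γ hkm ν₂ i j) ^ 2)]
    apply Finset.sum_congr rfl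
    intro p _
    rw [← Equiv.sum_comp e (fun j => (AMat k s q m γ hkm ν₁ (e p) j - AMat k s q m γ hkm ν₂ (e p) j) ^ 2)]
    apply Finset.sum_congr rfl
    intro p' _
    unfold AMat
    rw [Matrix.reindex_apply, Matrix.reindex_apply, Matrix.submatrix_apply, Matrix.submatrix_apply]
    rw [← he]
    rw [Equiv.symm_apply_apply, Equiv.symm_apply_apply]
  have hBdiff : ∀ a c : Fin k,
      (bMat k s q γ ν₁ a c - bMat k s q γ ν₂ a c) ^ 2
        = if (c:ℕ) < q * s then
            (if h : ((c:ℕ) % s) < s then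
              (eMat k s γ ν₁ a ⟨(c:ℕ)%s, h⟩ - eMat k s γ ν₂ a ⟨(c:ℕ)%s, h⟩)^2 else 0)
          else 0 := by
    intro a c
    rw [bMat_apply q γ hs, bMat_apply q γ hs]
    by_cases h : (c:ℕ) < q * s
    · rw [dif_pos h, dif_pos h, if_pos h, dif_pos (Nat.mod_lt _ hs)]
    · rw [dif_neg h, dif_neg h, if_neg h]
      ring
  -- inner double-sum over the b-blocks
  have step2 : ∀ a : Fin k, ∑ c : Fin k, (bMat k s q γ ν₁ a c - bMat k s q γ ν₂ a c) ^ 2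
      = q * ∑ t : Fin s, (eMat k s γ ν₁ a t - eMat k s γ ν₂ a t) ^ 2 := by
    intro a
    set G : ℕ → ℝ := fun j => if h : j < s then
      (eMat k s γ ν₁ a ⟨j, h⟩ - eMat k s γ ν₂ a ⟨j, h⟩)^2 else 0 with hG
    have h1 : ∑ c : Fin k, (bMat k s q γ ν₁ a c - bMat k s q γ ν₂ a c) ^ 2
        = ∑ j ∈ range k, (if j < q * s then G (j % s) else 0) := by
      rw [← Fin.sum_univ_eq_sum_range (fun j => if j < q * s then G (j % s) else 0) k]
      apply Finset.sum_congr rfl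
      intro c _
      exact hBdiff a c
    rw [h1]
    have h2 : ∑ j ∈ range k, (if j < q * s then G (j % s) else 0)
        = ∑ j ∈ range (q * s), (if j < q * s then G (j % s) else 0) := by
      symm
      apply Finset.sum_subset (Finset.range_subset_range.mpr hqs)
      intro x _ hx
      rw [if_neg (by simpa using hx)]
    rw [h2]
    have h3 : ∑ j ∈ range (q * s), (if j < q * s then G (j % s) else 0)
        = ∑ j ∈ range (q * s), G (j % s) := by
      apply Finset.sum_congr rfl
      intro j hj
      rw [if_pos (Finset.mem_range.mp hj)]
    rw [h3, periodize]
    congr 1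
    rw [← Fin.sum_univ_eq_sum_range G s]
    apply Finset.sum_congr rfl
    intro t _
    rw [hG]
    simp only []
    rw [dif_pos t.isLt]
  have step3 : ∑ p, ∑ p', (M₁ p p' - M₂ p p') ^ 2
      = 2 * ∑ a : Fin k, ∑ c : Fin k, (bMat k s q γ ν₁ a c - bMat k s q γ ν₂ a c) ^ 2 := by
    rw [Fintype.sum_sum_type]
    have houter : ∀ p : Fin k ⊕ Fin k, ∑ p', (M₁ p p' - M₂ p p') ^ 2 =
        (∑ a' : Fin k, (M₁ p (Sum.inl a') - M₂ p (Sum.inl a'))^2)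
        + ∑ c' : Fin k, (M₁ p (Sum.inr c') - M₂ p (Sum.inr c'))^2 := fun p =>
      Fintype.sum_sum_type _
    rw [Finset.sum_congr rfl (fun p _ => houter (Sum.inl p)),
        Finset.sum_congr rfl (fun p _ => houter (Sum.inr p))]
    simp only [hM₁, hM₂, Matrix.fromBlocks_apply₁₁, Matrix.fromBlocks_apply₁₂,
      Matrix.fromBlocks_apply₂₁, Matrix.fromBlocks_apply₂₂, Matrix.zero_apply,
      Matrix.transpose_apply, sub_zero, sub_self]
    simp only [ne_eq, OfNat.ofNat_ne_zero, not_false_eq_true, zero_pow,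
      Finset.sum_const_zero, zero_add, add_zero]
    have hcomm : ∑ x : Fin k, ∑ x1 : Fin k, (bMat k s q γ ν₁ x1 x - bMat k s q γ ν₂ x1 x) ^ 2
        = ∑ x1 : Fin k, ∑ x : Fin k, (bMat k s q γ ν₁ x1 x - bMat k s q γ ν₂ x1 x) ^ 2 :=
      Finset.sum_comm
    rw [hcomm]
    ring
  have step4 : ∑ a : Fin k, ∑ t : Fin s, (eMat k s γ ν₁ a t - eMat k s γ ν₂ a t) ^ 2
      = γ ^ 2 * hammingDist ν₁ ν₂ := by
    rw [← Fintype.sum_prod_type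
      (f := fun p : Fin k × Fin s => (eMat k s γ ν₁ p.1 p.2 - eMat k s γ ν₂ p.1 p.2) ^ 2)]
    have hterm : ∀ p : Fin k × Fin s,
        (eMat k s γ ν₁ p.1 p.2 - eMat k s γ ν₂ p.1 p.2) ^ 2
          = if ν₁ p ≠ ν₂ p then γ ^ 2 else 0 := by
      intro p
      unfold eMat
      simp only [Matrix.of_apply]
      cases h1 : ν₁ p <;> cases h2 : ν₂ p <;> simp [Prod.mk.eta, h1, h2] <;> ring
    rw [Finset.sum_congr rfl (fun p _ => hterm p)]
    rw [Finset.sum_ite, Finset.sum_const, Finset.sum_const_zero, add_zero]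
    unfold hammingDist
    push_cast
    ring
  rw [step1, step3]
  rw [Finset.sum_congr rfl (fun a _ => step2 a), ← Finset.mul_sum, step4]
  ring

end Mat

end VGPack



section MainThm
open VGPack


/-- the Varshamov–Gilbert packing set of low rank symmetric matrices.
For even `m, r` with `r ≤ m` and `γ > 0` there is a finite set `𝒜⁰` of `m×m` real
symmetric matrices with entries in `{0, γ}`, containing `0`, of cardinality at least
`2^{mr/32} + 1`, all of rank at most `r`, any two distinct members being
`(mr/16)·⌊m/r⌋·γ² ≥ γ²m²/32`-separated in squared Frobenius norm. -/
theorem varshamov_gilbert_packing (m r : ℕ) (hm : Even m) (hr : Even r)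
    (hm0 : 0 < m) (hr0 : 0 < r) (hrm : r ≤ m) (γ : ℝ) (hγ : 0 < γ) :
    ∃ 𝒜 : Finset (Matrix (Fin m) (Fin m) ℝ),
      (0 : Matrix (Fin m) (Fin m) ℝ) ∈ 𝒜 ∧
      (2 : ℝ) ^ ((m * r : ℝ) / 32) + 1 ≤ (𝒜.card : ℝ) ∧
      (∀ A ∈ 𝒜, A.IsSymm) ∧
      (∀ A ∈ 𝒜, ∀ i j, A i j = 0 ∨ A i j = γ) ∧
      (∀ A ∈ 𝒜, A.rank ≤ r) ∧
      (∀ A₁ ∈ 𝒜, ∀ A₂ ∈ 𝒜, A₁ ≠ A₂ →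
        ((m * r : ℝ) / 16) * ((m / r : ℕ) : ℝ) * γ ^ 2 ≤
          ∑ i, ∑ j, (A₁ i j - A₂ i j) ^ 2) ∧
      γ ^ 2 * (m : ℝ) ^ 2 / 32 ≤ ((m * r : ℝ) / 16) * ((m / r : ℕ) : ℝ) * γ ^ 2 := by
  classical
  -- the last inequality holds in general
  have hq1 : 1 ≤ m / r := (Nat.one_le_div_iff hr0).mpr hrm
  have hm2rq : m ≤ 2 * (r * (m / r)) := by
    have h1 : m % r < r := Nat.mod_lt _ hr0
    have h2 : m = r * (m / r) + m % r := (Nat.div_add_mod m r).symm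
    have h3 : r ≤ r * (m / r) := Nat.le_mul_of_pos_right r hq1
    omega
  have hlast : γ ^ 2 * (m : ℝ) ^ 2 / 32 ≤ ((m * r : ℝ) / 16) * ((m / r : ℕ) : ℝ) * γ ^ 2 := by
    have hcast : (m : ℝ) ≤ 2 * ((r : ℝ) * ((m / r : ℕ) : ℝ)) := by exact_mod_cast hm2rq
    have hm0' : (0 : ℝ) ≤ (m : ℝ) := Nat.cast_nonneg m
    nlinarith [mul_nonneg (mul_nonneg (sub_nonneg.mpr hcast) hm0') (sq_nonneg γ)]
  by_cases hspec : m = 2 ∧ r = 2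
  · -- special case m = r = 2
    obtain ⟨hm2, hr2⟩ := hspec
    subst hm2; subst hr2
    set M1 : Matrix (Fin 2) (Fin 2) ℝ := !![γ, 0; 0, 0] with hM1
    set M2 : Matrix (Fin 2) (Fin 2) ℝ := !![γ, 0; 0, γ] with hM2
    have hd1 : M1 ≠ 0 := by
      intro h
      have := congrFun (congrFun h 0) 0
      simp [hM1] at this
      exact hγ.ne' this
    have hd2 : M2 ≠ 0 := by
      intro h
      have := congrFun (congrFun h 0) 0
      simp [hM2] at this
      exact hγ.ne' this
    have hd3 : M1 ≠ M2 := by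
      intro h
      have := congrFun (congrFun h 1) 1
      simp [hM1, hM2] at this
      exact hγ.ne' this.symm
    refine ⟨{0, M1, M2}, by simp, ?_, ?_, ?_, ?_, ?_, hlast⟩
    · have hcard : ({0, M1, M2} : Finset (Matrix (Fin 2) (Fin 2) ℝ)).card = 3 := by
        rw [Finset.card_insert_of_notMem (by simp [hd1.symm, hd2.symm]),
          Finset.card_insert_of_notMem (by simp [hd3]), Finset.card_singleton]
      rw [hcard]
      have h1 : (2:ℝ) ^ (((2*2:ℕ) : ℝ) / 32) ≤ 2 := by
        nth_rewrite 2 [show (2:ℝ) = (2:ℝ) ^ (1:ℝ) by rw [Real.rpow_one]]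
        apply Real.rpow_le_rpow_of_exponent_le (by norm_num)
        norm_num
      push_cast at h1 ⊢
      linarith
    · intro A hA
      rcases Finset.mem_insert.mp hA with rfl | hA
      · exact Matrix.isSymm_zero
      rcases Finset.mem_insert.mp hA with rfl | hA
      · unfold Matrix.IsSymm
        ext i j
        fin_cases i <;> fin_cases j <;> simp [hM1]
      rw [Finset.mem_singleton.mp hA]
      unfold Matrix.IsSymm
      ext i j
      fin_cases i <;> fin_cases j <;> simp [hM2]
    · intro A hA i j
      rcases Finset.mem_insert.mp hA with rfl | hA
      · left; rfl
      rcases Finset.mem_insert.mp hA with rfl | hA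
      · fin_cases i <;> fin_cases j <;> simp [hM1]
      rw [Finset.mem_singleton.mp hA]
      fin_cases i <;> fin_cases j <;> simp [hM2]
    · intro A hA
      calc A.rank ≤ Fintype.card (Fin 2) := Matrix.rank_le_card_width A
        _ = 2 := by simp
    · intro A₁ h₁ A₂ h₂ hne
      have hgoal : ∀ A₁' A₂' : Matrix (Fin 2) (Fin 2) ℝ,
          (γ^2 ≤ ∑ i, ∑ j, (A₁' i j - A₂' i j) ^ 2) →
          ((2 * 2 : ℝ) / 16) * (((2/2 : ℕ)) : ℝ) * γ ^ 2 ≤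
            ∑ i, ∑ j, (A₁' i j - A₂' i j) ^ 2 := by
        intro A₁' A₂' h
        have heq : ((2 * 2 : ℝ) / 16) * (((2/2 : ℕ)) : ℝ) * γ ^ 2 = γ^2/4 := by
          norm_num
          ring
        rw [heq]
        nlinarith [sq_nonneg γ]
      have hmem : ∀ A ∈ ({0, M1, M2} : Finset (Matrix (Fin 2) (Fin 2) ℝ)),
          A = 0 ∨ A = M1 ∨ A = M2 := by
        intro A hA
        simpa using hA
      rcases hmem A₁ h₁ with rfl|rfl|rfl <;> rcases hmem A₂ h₂ with rfl|rfl|rfl <;>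
        first
          | exact absurd rfl hne
          | (apply hgoal
             simp [Fin.sum_univ_two, hM1, hM2]
             try nlinarith [sq_nonneg γ, hγ])
  · -- general case
    obtain ⟨k, hkm'⟩ := hm
    obtain ⟨s, hrs'⟩ := hr
    subst hkm'; subst hrs'
    have hs : 0 < s := by omega
    have hk : 0 < k := by omega
    have hks2 : 2 ≤ k * s := by
      rcases Nat.lt_or_ge (k * s) 2 with h | h
      · exfalso
        have hk1 : k = 1 ∧ s = 1 := by
          constructor <;> nlinarith
        exact hspec ⟨by omega, by omega⟩
      · exact h
    set q := (k + k) / (s + s) with hqdef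
    have hq0 : 0 < q := hq1
    have hqs : q * s ≤ k := by
      have h1 : q * (s + s) ≤ k + k := Nat.div_mul_le_self _ _
      have h2 : q * (s + s) = q * s + q * s := by ring
      omega
    have hkm : k + k = k + k := rfl
    have hcardι : Fintype.card (Fin k × Fin s) = k * s := by simp
    obtain ⟨S, h0S, hcardS, hsepS⟩ := exists_code (ι := Fin k × Fin s) (by rw [hcardι]; exact hks2)
    -- distance and injectivity
    have hdist := fun ν₁ ν₂ => AMat_dist (γ := γ) hs hqs hkm ν₁ ν₂
    have hinj : Set.InjOn (AMat k s q (k+k) γ hkm) ↑S := by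
      intro ν₁ _ ν₂ _ hA
      by_contra hne
      have h1 := hdist ν₁ ν₂
      rw [hA] at h1
      simp only [sub_self] at h1
      have h2 : (0:ℝ) = 2 * q * γ^2 * hammingDist ν₁ ν₂ := by
        rw [← h1]
        simp
      have h3 : 0 < hammingDist ν₁ ν₂ := Nat.pos_of_ne_zero (fun h => hne (hammingDist_eq_zero.mp h))
      have h4 : (0:ℝ) < 2 * q * γ^2 * hammingDist ν₁ ν₂ := by
        have : (0:ℝ) < (hammingDist ν₁ ν₂ : ℝ) := by exact_mod_cast h3
        have hq0' : (0:ℝ) < (q:ℝ) := by exact_mod_cast hq0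
        positivity
      linarith [h2 ▸ h4]
    refine ⟨S.image (AMat k s q (k+k) γ hkm), ?_, ?_, ?_, ?_, ?_, ?_, hlast⟩
    · refine Finset.mem_image.mpr ⟨fun _ => false, h0S, AMat_zero hkm⟩
    · rw [Finset.card_image_of_injOn hinj]
      have hexp2 : ((k+k : ℕ) : ℝ) * ((s+s : ℕ) : ℝ) / 32
          = ((Fintype.card (Fin k × Fin s) : ℝ)) / 8 := by
        rw [hcardι]; push_cast; ring
      rw [hexp2]
      exact hcardS
    · intro A hA
      obtain ⟨ν, _, rfl⟩ := Finset.mem_image.mp hA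
      exact AMat_isSymm hkm ν
    · intro A hA i j
      obtain ⟨ν, _, rfl⟩ := Finset.mem_image.mp hA
      exact AMat_entries hs hkm ν i j
    · intro A hA
      obtain ⟨ν, _, rfl⟩ := Finset.mem_image.mp hA
      exact AMat_rank hkm ν
    · intro A₁ h₁ A₂ h₂ hne
      obtain ⟨ν₁, hν₁, rfl⟩ := Finset.mem_image.mp h₁
      obtain ⟨ν₂, hν₂, rfl⟩ := Finset.mem_image.mp h₂
      have hνne : ν₁ ≠ ν₂ := fun h => hne (h ▸ rfl)
      rw [hdist ν₁ ν₂]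
      have hsep2 : ((k * s : ℕ) : ℝ) / 8 ≤ (hammingDist ν₁ ν₂ : ℝ) := by
        have h := hsepS ν₁ hν₁ ν₂ hν₂ hνne
        rwa [hcardι] at h
      have hfac : (0:ℝ) ≤ 2 * (q:ℝ) * γ^2 := by positivity
      have hmul := mul_le_mul_of_nonneg_left hsep2 hfac
      push_cast at hmul ⊢
      nlinarith [hmul]

end MainThm
end
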